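/- arXiv:1007.0223 — 3 statements merged into one kernel-verified Lean document; each statement's English description precedes it below -/
import Mathlib

section
/- Let R be an associative unital ring and M a left R-module with a Hausdorff linear topology. If M has the descending chain condition on closed submodules, then M is linearly compact. In particular, every artinian R-module is linearly compact under the discrete topology. -/
/-- A *linear topology* on a left `R`-module `M`: the module operations are continuous,
and `0` has a neighborhood basis consisting of submodules. -/
def IsLinearTopologyOld (R M : Type*) [Ring R] [AddCommGroup M] [Module R M]
    [TopologicalSpace M] : Prop :=
  ContinuousAdd M ∧ ContinuousNeg M ∧ (∀ r : R, Continuous fun m : M => r • m) ∧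
    ∀ U ∈ nhds (0 : M), ∃ N : Submodule R M, (N : Set M) ∈ nhds (0 : M) ∧ (N : Set M) ⊆ U

/-- `M` is *linearly compact*: its topology is a Hausdorff linear topology such that every
family of cosets of closed submodules of `M` with the finite intersection property has
nonempty intersection. -/
def IsLinearlyCompact (R M : Type*) [Ring R] [AddCommGroup M] [Module R M]
    [TopologicalSpace M] : Prop :=
  IsLinearTopologyOld R M ∧ T2Space M ∧
    ∀ 𝒞 : Set (Set M),
      (∀ C ∈ 𝒞, ∃ (N : Submodule R M) (x : M),
        IsClosed (N : Set M) ∧ C = (x + ·) '' (N : Set M)) →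
      (∀ 𝒟 ⊆ 𝒞, 𝒟.Finite → (⋂₀ 𝒟).Nonempty) →
      (⋂₀ 𝒞).Nonempty

section AuxLC

variable {R M : Type*} [Ring R] [AddCommGroup M] [Module R M]

lemma auxLC_mem_coset {N : Submodule R M} {x m : M} :
    m ∈ (x + ·) '' (N : Set M) ↔ m - x ∈ N := by
  constructor
  · rintro ⟨n, hn, rfl⟩; simpa using hn
  · intro h; exact ⟨m - x, h, add_sub_cancel x m⟩

lemma auxLC_coset_eq {N : Submodule R M} {x z : M} (hz : z ∈ (x + ·) '' (N : Set M)) :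
    (x + ·) '' (N : Set M) = (z + ·) '' (N : Set M) := by
  rw [auxLC_mem_coset] at hz
  ext m
  rw [auxLC_mem_coset, auxLC_mem_coset]
  constructor
  · intro h
    have e : m - z = (m - x) - (z - x) := by abel
    rw [e]; exact N.sub_mem h hz
  · intro h
    have e : m - x = (m - z) + (z - x) := by abel
    rw [e]; exact N.add_mem h hz

lemma auxLC_inter_coset {N P : Submodule R M} {x y z : M}
    (hzN : z ∈ (x + ·) '' (N : Set M)) (hzP : z ∈ (y + ·) '' (P : Set M)) :
    ((x + ·) '' (N : Set M)) ∩ ((y + ·) '' (P : Set M)) =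
      (z + ·) '' ((N ⊓ P : Submodule R M) : Set M) := by
  rw [auxLC_coset_eq hzN, auxLC_coset_eq hzP]
  ext m
  simp only [Set.mem_inter_iff, auxLC_mem_coset, Submodule.mem_inf]

variable [TopologicalSpace M]

/-- A nonempty finite intersection of closed cosets is a closed coset. -/
lemma auxLC_sInter_finite {𝒞 : Set (Set M)}
    (hmem : ∀ C ∈ 𝒞, ∃ (N : Submodule R M) (x : M),
      IsClosed (N : Set M) ∧ C = (x + ·) '' (N : Set M)) :
    ∀ 𝒟 : Set (Set M), 𝒟.Finite → 𝒟 ⊆ 𝒞 → (⋂₀ 𝒟).Nonempty →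
      ∃ (N : Submodule R M) (z : M),
        IsClosed (N : Set M) ∧ ⋂₀ 𝒟 = (z + ·) '' (N : Set M) := by
  intro 𝒟 h𝒟
  refine Set.Finite.induction_on 𝒟 h𝒟 ?_ ?_
  · intro _ _
    refine ⟨⊤, 0, isClosed_univ.mono ?_, ?_⟩ <;>
      simp [Set.sInter_empty, Set.image_eq_range]
  · rintro C 𝒟' - hfin ih hsub hne
    rw [Set.sInter_insert] at hne ⊢
    obtain ⟨z, hzC, hz𝒟⟩ := hne
    obtain ⟨P, y, hPc, hPe⟩ := ih (fun D hD => hsub (Set.mem_insert_of_mem _ hD)) ⟨z, hz𝒟⟩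
    obtain ⟨N, x, hNc, hNe⟩ := hmem C (hsub (Set.mem_insert _ _))
    subst hNe
    rw [hPe] at hz𝒟 ⊢
    refine ⟨N ⊓ P, z, ?_, auxLC_inter_coset hzC hz𝒟⟩
    rw [Submodule.coe_inf]
    exact hNc.inter hPc

/-- DCC on closed submodules gives minimal elements in nonempty sets of closed submodules. -/
lemma auxLC_minimal {S : Set (Submodule R M)} (hScl : ∀ N ∈ S, IsClosed (N : Set M))
    (hdcc : ∀ f : ℕ → Submodule R M, (∀ n, IsClosed ((f n : Submodule R M) : Set M)) →
        (∀ n, f (n + 1) ≤ f n) → ∃ n, ∀ m, n ≤ m → f m = f n)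
    (hne : S.Nonempty) : ∃ N ∈ S, ∀ P ∈ S, P ≤ N → P = N := by
  by_contra h
  push_neg at h
  obtain ⟨N₀, hN₀⟩ := hne
  have step : ∀ N : {N // N ∈ S}, ∃ P : {N // N ∈ S}, P.1 < N.1 := by
    rintro ⟨N, hN⟩
    obtain ⟨P, hPS, hPle, hPne⟩ := h N hN
    exact ⟨⟨P, hPS⟩, lt_of_le_of_ne hPle hPne⟩
  choose g hg using step
  set f : ℕ → {N // N ∈ S} := fun n => g^[n] ⟨N₀, hN₀⟩ with hf
  have hsucc : ∀ n, (f (n + 1)).1 < (f n).1 := by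
    intro n
    have e : f (n + 1) = g (f n) := Function.iterate_succ_apply' g n _
    rw [e]; exact hg (f n)
  obtain ⟨n, hn⟩ := hdcc (fun n => (f n).1) (fun n => hScl _ (f n).2)
    (fun n => (hsucc n).le)
  exact absurd (hn (n + 1) (Nat.le_succ n)) (hsucc n).ne

/-- The main step: DCC on closed submodules gives the coset intersection property. -/
lemma auxLC_main
    (hdcc : ∀ f : ℕ → Submodule R M, (∀ n, IsClosed ((f n : Submodule R M) : Set M)) →
        (∀ n, f (n + 1) ≤ f n) → ∃ n, ∀ m, n ≤ m → f m = f n)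
    (𝒞 : Set (Set M))
    (hmem : ∀ C ∈ 𝒞, ∃ (N : Submodule R M) (x : M),
      IsClosed (N : Set M) ∧ C = (x + ·) '' (N : Set M))
    (hfip : ∀ 𝒟 ⊆ 𝒞, 𝒟.Finite → (⋂₀ 𝒟).Nonempty) :
    (⋂₀ 𝒞).Nonempty := by
  set S : Set (Submodule R M) := { N | IsClosed (N : Set M) ∧ ∃ 𝒟 : Set (Set M),
      𝒟 ⊆ 𝒞 ∧ 𝒟.Finite ∧ ∃ z, ⋂₀ 𝒟 = (z + ·) '' (N : Set M) } with hS
  have hSne : S.Nonempty := by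
    obtain ⟨N, z, hNc, hNe⟩ := auxLC_sInter_finite hmem ∅ Set.finite_empty
      (Set.empty_subset _) (hfip ∅ (Set.empty_subset _) Set.finite_empty)
    exact ⟨N, hNc, ∅, Set.empty_subset _, Set.finite_empty, z, hNe⟩
  obtain ⟨N₀, ⟨hN₀c, 𝒟₀, h𝒟₀𝒞, h𝒟₀f, x₀, h𝒟₀e⟩, hmin⟩ :=
    auxLC_minimal (fun N hN => hN.1) hdcc hSne
  refine ⟨x₀, ?_⟩
  intro C hC
  obtain ⟨N, x, hNc, hNe⟩ := hmem C hC
  have hfin' : (insert C 𝒟₀).Finite := h𝒟₀f.insert C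
  have hsub' : insert C 𝒟₀ ⊆ 𝒞 := Set.insert_subset hC h𝒟₀𝒞
  obtain ⟨z, hz⟩ := hfip _ hsub' hfin'
  rw [Set.sInter_insert] at hz
  obtain ⟨hzC, hz𝒟₀⟩ := hz
  have hzN : z ∈ (x + ·) '' (N : Set M) := hNe ▸ hzC
  have hzN₀ : z ∈ (x₀ + ·) '' (N₀ : Set M) := h𝒟₀e ▸ hz𝒟₀
  have hinter : ⋂₀ insert C 𝒟₀ = (z + ·) '' ((N ⊓ N₀ : Submodule R M) : Set M) := by
    rw [Set.sInter_insert, hNe, h𝒟₀e]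
    exact auxLC_inter_coset hzN hzN₀
  have hmemS : N ⊓ N₀ ∈ S := by
    refine ⟨?_, insert C 𝒟₀, hsub', hfin', z, hinter⟩
    rw [Submodule.coe_inf]; exact hNc.inter hN₀c
  have hle : N ⊓ N₀ = N₀ := hmin _ hmemS inf_le_right
  have hN₀leN : N₀ ≤ N := by rw [← hle]; exact inf_le_left
  rw [hNe, auxLC_mem_coset]
  rw [auxLC_mem_coset] at hzN
  have hzx₀ : z - x₀ ∈ N₀ := by rw [← auxLC_mem_coset]; exact hzN₀
  have e : x₀ - x = (z - x) - (z - x₀) := by abel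
  rw [e]
  exact N.sub_mem hzN (hN₀leN hzx₀)

end AuxLC

/-- A Hausdorff linearly topologized module with DCC on closed submodules is linearly
compact; in particular, an artinian module is linearly compact in the discrete topology. -/
theorem linearlyCompact_of_dcc_closed (R : Type*) [Ring R] :
    (∀ (M : Type*) [AddCommGroup M] [Module R M] [TopologicalSpace M],
      IsLinearTopologyOld R M → T2Space M →
      (∀ f : ℕ → Submodule R M, (∀ n, IsClosed ((f n : Submodule R M) : Set M)) →
        (∀ n, f (n + 1) ≤ f n) → ∃ n, ∀ m, n ≤ m → f m = f n) →
      IsLinearlyCompact R M) ∧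
    (∀ (M : Type*) [AddCommGroup M] [Module R M] [TopologicalSpace M] [DiscreteTopology M],
      IsArtinian R M → IsLinearlyCompact R M) := by
  constructor
  · intro M _ _ _ hlin ht2 hdcc
    exact ⟨hlin, ht2, fun 𝒞 hmem hfip => auxLC_main hdcc 𝒞 hmem hfip⟩
  intro M _ _ _ _ hart
  have hdcc : ∀ f : ℕ → Submodule R M, (∀ n, IsClosed ((f n : Submodule R M) : Set M)) →
      (∀ n, f (n + 1) ≤ f n) → ∃ n, ∀ m, n ≤ m → f m = f n := by
    intro f _ hf
    have hanti : ∀ i j, i ≤ j → f j ≤ f i := fun i j h =>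
      antitone_nat_of_succ_le hf h
    obtain ⟨n, hn⟩ := IsArtinian.monotone_stabilizes (R := R) (M := M)
      ⟨fun k => OrderDual.toDual (f k), fun i j hij => hanti i j hij⟩
    exact ⟨n, fun m hm => (hn m hm).symm⟩
  have hlin : IsLinearTopologyOld R M := by
    refine ⟨⟨continuous_of_discreteTopology⟩, ⟨continuous_of_discreteTopology⟩,
      fun r => continuous_of_discreteTopology, ?_⟩
    intro U hU
    refine ⟨⊥, ?_, ?_⟩
    · rw [Submodule.bot_coe]
      exact (isOpen_discrete _).mem_nhds rfl
    · rw [Submodule.bot_coe]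
      rintro m rfl
      exact mem_of_mem_nhds hU
  exact ⟨hlin, inferInstance, fun 𝒞 hmem hfip => auxLC_main hdcc 𝒞 hmem hfip⟩
end

section
/- Let k be a field and L a Lie algebra over k generated as a Lie algebra by elements g₁, …, g_r. Define subspaces L_(n) recursively by L_(1) = L and L_(n+1) = Σ_{0<m<n+1} ⁅L_(m), L_(n+1−m)⁆. Then for every integer n ≥ 2, L_(n) = Σ over all sequences (i₁, …, i_{n−1}) ∈ {1,…,r}^{n−1} of the subspaces {⁅…⁅⁅a, g_{i₁}⁆, g_{i₂}⁆, …, g_{i_{n−1}}⁆ : a ∈ L}. In particular ⁅L, L⁆ = Σ_{i=1}^r {⁅a, g_i⁆ : a ∈ L}, and L_(n) coincides with the n-th term of the lower central series of L. -/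
/-- For subspaces `A`, `B` of a Lie algebra `L`, the `k`-subspace spanned by all
brackets `⁅a, b⁆` with `a ∈ A`, `b ∈ B`. -/
def bracketSpan (k L : Type*) [Field k] [LieRing L] [LieAlgebra k L]
    (A B : Submodule k L) : Submodule k L :=
  Submodule.span k {x : L | ∃ a ∈ A, ∃ b ∈ B, x = ⁅a, b⁆}

section Aux

variable {k L : Type*} [Field k] [LieRing L] [LieAlgebra k L] {r : ℕ} (g : Fin r → L)

/-- The span of iterated right brackets of length `m` of generators, starting
from an arbitrary element. -/
def brT (k : Type*) {L : Type*} [Field k] [LieRing L] [LieAlgebra k L] {r : ℕ}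
    (g : Fin r → L) (m : ℕ) : Submodule k L :=
  ⨆ w : Fin m → Fin r,
    Submodule.span k {x : L | ∃ a : L, x = (List.ofFn w).foldl (fun y j => ⁅y, g j⁆) a}

theorem brT_word_mem {m : ℕ} (w : Fin m → Fin r) (a : L) :
    (List.ofFn w).foldl (fun y j => ⁅y, g j⁆) a ∈ brT k g m :=
  Submodule.mem_iSup_of_mem w (Submodule.subset_span ⟨a, rfl⟩)

@[simp] theorem brT_zero : brT k g 0 = ⊤ := by
  refine le_antisymm le_top fun x _ => ?_
  simpa using brT_word_mem g (Fin.elim0) x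

theorem foldl_snoc {m : ℕ} (w : Fin m → Fin r) (i : Fin r) (a : L) :
    (List.ofFn (Fin.snoc w i)).foldl (fun y j => ⁅y, g j⁆) a
      = ⁅(List.ofFn w).foldl (fun y j => ⁅y, g j⁆) a, g i⁆ := by
  rw [List.ofFn_succ' (Fin.snoc w i), List.concat_eq_append, List.foldl_append]
  simp

theorem foldl_split {m : ℕ} (w : Fin (m + 1) → Fin r) (a : L) :
    (List.ofFn w).foldl (fun y j => ⁅y, g j⁆) a
      = ⁅(List.ofFn fun i => w i.castSucc).foldl (fun y j => ⁅y, g j⁆) a,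
          g (w (Fin.last m))⁆ := by
  rw [List.ofFn_succ' w, List.concat_eq_append, List.foldl_append]
  simp

theorem brT_antitone {m : ℕ} : brT k g (m + 1) ≤ brT k g m := by
  refine iSup_le fun w => Submodule.span_le.2 ?_
  rintro x ⟨a, rfl⟩
  rw [List.ofFn_succ (f := w)]
  exact brT_word_mem g (fun i => w i.succ) ⁅a, g (w 0)⁆

/-- Right bracket with a fixed element as a linear map. -/
def rbr (k : Type*) {L : Type*} [Field k] [LieRing L] [LieAlgebra k L] (b : L) :
    L →ₗ[k] L where
  toFun s := ⁅s, b⁆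
  map_add' x y := add_lie x y b
  map_smul' c x := smul_lie c x b

theorem lie_gen_mem_brT {m : ℕ} (i : Fin r) {s : L} (hs : s ∈ brT k g m) :
    ⁅s, g i⁆ ∈ brT k g (m + 1) := by
  have : brT k g m ≤ Submodule.comap (rbr k (g i)) (brT k g (m + 1)) := by
    refine iSup_le fun w => Submodule.span_le.2 ?_
    rintro x ⟨a, rfl⟩
    simpa [rbr, ← foldl_snoc g w i a] using brT_word_mem g (Fin.snoc w i) a
  exact this hs

theorem lie_mem_brT (hgen : LieSubalgebra.lieSpan k L (Set.range g) = ⊤)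
    (b : L) {m : ℕ} {s : L} (hs : s ∈ brT k g m) : ⁅s, b⁆ ∈ brT k g (m + 1) := by
  let K : LieSubalgebra k L :=
    { carrier := {b : L | ∀ m : ℕ, ∀ s ∈ brT k g m, ⁅s, b⁆ ∈ brT k g (m + 1)}
      add_mem' := fun {x y} hx hy m s hs => by
        rw [lie_add]
        exact add_mem (hx m s hs) (hy m s hs)
      zero_mem' := fun m s _ => by simp
      smul_mem' := fun c x hx m s hs => by
        rw [lie_smul]
        exact Submodule.smul_mem _ c (hx m s hs)
      lie_mem' := fun {x y} hx hy m s hs => by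
        have h : ⁅s, ⁅x, y⁆⁆ = ⁅⁅s, x⁆, y⁆ - ⁅⁅s, y⁆, x⁆ := by
          rw [leibniz_lie s x y, sub_eq_add_neg, lie_skew]
        rw [h]
        exact sub_mem
          (brT_antitone g (hy (m + 1) _ (hx m s hs)))
          (brT_antitone g (hx (m + 1) _ (hy m s hs))) }
  have hK : Set.range g ⊆ K := by
    rintro _ ⟨i, rfl⟩
    exact fun m s hs => lie_gen_mem_brT g i hs
  have : (⊤ : LieSubalgebra k L) ≤ K := hgen ▸ (LieSubalgebra.lieSpan_le.2 hK)
  exact this (LieSubalgebra.mem_top b) m s hs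

/-- Left bracket with a fixed element as a linear map. -/
def lbr (k : Type*) {L : Type*} [Field k] [LieRing L] [LieAlgebra k L] (s : L) :
    L →ₗ[k] L where
  toFun t := ⁅s, t⁆
  map_add' x y := lie_add s x y
  map_smul' c x := lie_smul c s x

theorem lie_brT_brT (hgen : LieSubalgebra.lieSpan k L (Set.range g) = ⊤) :
    ∀ q m : ℕ, ∀ s ∈ brT k g m, ∀ t ∈ brT k g q, ⁅s, t⁆ ∈ brT k g (m + q + 1) := by
  intro q
  induction q with
  | zero => exact fun m s hs t _ => lie_mem_brT g hgen t hs
  | succ q ih =>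
    intro m s hs t ht
    have : brT k g (q + 1) ≤ Submodule.comap (lbr k s) (brT k g (m + (q + 1) + 1)) := by
      refine iSup_le fun w => Submodule.span_le.2 ?_
      rintro x ⟨a, rfl⟩
      rw [foldl_split g w a]
      set u := (List.ofFn fun i => w i.castSucc).foldl (fun y j => ⁅y, g j⁆) a with hu
      have hum : u ∈ brT k g q := brT_word_mem g _ a
      show ⁅s, ⁅u, g (w (Fin.last q))⁆⁆ ∈ brT k g (m + (q + 1) + 1)
      have key : ⁅s, ⁅u, g (w (Fin.last q))⁆⁆
          = ⁅⁅s, u⁆, g (w (Fin.last q))⁆ - ⁅⁅s, g (w (Fin.last q))⁆, u⁆ := by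
        rw [leibniz_lie, sub_eq_add_neg, lie_skew]
      have h1 : ⁅⁅s, u⁆, g (w (Fin.last q))⁆ ∈ brT k g (m + (q + 1) + 1) := by
        exact lie_gen_mem_brT g (w (Fin.last q)) (ih m s hs u hum)
      have h2 : ⁅⁅s, g (w (Fin.last q))⁆, u⁆ ∈ brT k g (m + (q + 1) + 1) := by
        have := ih (m + 1) _ (lie_mem_brT g hgen (g (w (Fin.last q))) hs) u hum
        convert this using 2
        omega
      rw [key]
      exact sub_mem h1 h2
    exact this ht

end Aux

/-- If a Lie algebra `L` is generated by `g 0, …, g (r-1)`, and `L_(n)` is defined by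
`L_(1) = L`, `L_(n+1) = Σ_{0<m<n+1} ⁅L_(m), L_(n+1-m)⁆`, then for `n ≥ 2` the subspace
`L_(n)` is the sum over all sequences `(i₁,…,i_{n-1})` of the spaces of iterated brackets
`⁅…⁅⁅a, g i₁⁆, g i₂⁆, …, g i_{n-1}⁆`; in particular `⁅L,L⁆ = Σᵢ {⁅a, g i⁆}`; and `L_(n)`
is the `n`-th term of the lower central series of `L`. -/
theorem lie_power_eq_sum_right_brackets (k L : Type*) [Field k] [LieRing L]
    [LieAlgebra k L] (r : ℕ) (g : Fin r → L)
    (hgen : LieSubalgebra.lieSpan k L (Set.range g) = ⊤)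
    (Ln : ℕ → Submodule k L) (h1 : Ln 1 = ⊤)
    (hrec : ∀ n : ℕ, 1 ≤ n →
      Ln (n + 1) = ⨆ m : {m : ℕ // 0 < m ∧ m < n + 1},
        bracketSpan k L (Ln m) (Ln (n + 1 - m))) :
    (∀ n : ℕ, 2 ≤ n →
      Ln n = ⨆ w : Fin (n - 1) → Fin r,
        Submodule.span k
          {x : L | ∃ a : L, x = (List.ofFn w).foldl (fun y j => ⁅y, g j⁆) a}) ∧
    (bracketSpan k L ⊤ ⊤ =
      ⨆ i : Fin r, Submodule.span k {x : L | ∃ a : L, x = ⁅a, g i⁆}) ∧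
    (∀ n : ℕ, 1 ≤ n →
      Ln n = (LieModule.lowerCentralSeries k L L (n - 1)).toSubmodule) := by
  -- main claim: `Ln (p+1) = brT k g p` for all `p`
  have main : ∀ p : ℕ, Ln (p + 1) = brT k g p := by
    intro p
    induction p using Nat.strong_induction_on with
    | _ p ih =>
      match p with
      | 0 => simpa using h1
      | Nat.succ q =>
        rw [hrec (q + 1) (by omega)]
        apply le_antisymm
        · refine iSup_le ?_
          rintro ⟨m, hm0, hmlt⟩
          have e1 : Ln m = brT k g (m - 1) := by
            have h : m - 1 + 1 = m := by omega
            rw [← h]; exact ih (m - 1) (by omega)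
          have e2 : Ln (q + 1 + 1 - m) = brT k g (q + 1 - m) := by
            have h : q + 1 - m + 1 = q + 1 + 1 - m := by omega
            rw [← h]; exact ih (q + 1 - m) (by omega)
          show bracketSpan k L (Ln m) (Ln (q + 1 + 1 - m)) ≤ brT k g (q + 1)
          rw [e1, e2]
          refine Submodule.span_le.2 ?_
          rintro x ⟨a, ha, b, hb, rfl⟩
          have hbr := lie_brT_brT g hgen (q + 1 - m) (m - 1) a ha b hb
          have harith : m - 1 + (q + 1 - m) + 1 = q + 1 := by omega
          rwa [harith] at hbr
        · refine le_trans ?_ (le_iSup _ (⟨q + 1, by omega, by omega⟩ :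
            {m : ℕ // 0 < m ∧ m < q + 1 + 1}))
          show brT k g (q + 1) ≤ bracketSpan k L (Ln (q + 1)) (Ln (q + 1 + 1 - (q + 1)))
          have e2 : q + 1 + 1 - (q + 1) = 1 := by omega
          rw [e2, h1, ih q (by omega)]
          refine iSup_le fun w => Submodule.span_le.2 ?_
          rintro x ⟨a, rfl⟩
          rw [foldl_split g w a]
          exact Submodule.subset_span ⟨_, brT_word_mem g _ a, _, trivial, rfl⟩
  have lcs_eq : ∀ n : ℕ, (LieModule.lowerCentralSeries k L L n).toSubmodule = brT k g n := by
    intro n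
    induction n with
    | zero => simp
    | succ n ihn =>
      rw [LieModule.lowerCentralSeries_succ, LieSubmodule.lieIdeal_oper_eq_linear_span']
      apply le_antisymm
      · refine Submodule.span_le.2 ?_
        rintro x ⟨y, -, m, hm, rfl⟩
        have hmT : m ∈ brT k g n := by rw [← ihn]; exact hm
        have h2 : -⁅m, y⁆ ∈ brT k g (n + 1) := neg_mem (lie_mem_brT g hgen y hmT)
        rwa [lie_skew] at h2
      · refine iSup_le fun w => Submodule.span_le.2 ?_
        rintro x ⟨a, rfl⟩
        rw [foldl_split g w a]
        have hu : (List.ofFn fun i => w i.castSucc).foldl (fun y j => ⁅y, g j⁆) a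
            ∈ LieModule.lowerCentralSeries k L L n := by
          show _ ∈ (LieModule.lowerCentralSeries k L L n).toSubmodule
          rw [ihn]; exact brT_word_mem g _ a
        have h3 : ⁅g (w (Fin.last n)),
            (List.ofFn fun i => w i.castSucc).foldl (fun y j => ⁅y, g j⁆) a⁆ ∈
            Submodule.span k {m : L | ∃ x ∈ (⊤ : LieIdeal k L),
              ∃ n_1 ∈ LieModule.lowerCentralSeries k L L n, ⁅x, n_1⁆ = m} :=
          Submodule.subset_span ⟨_, trivial, _, hu, rfl⟩
        have h4 := neg_mem h3
        rwa [lie_skew] at h4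
  refine ⟨fun n hn => ?_, ?_, fun n hn => ?_⟩
  · obtain ⟨p, rfl⟩ : ∃ p, n = p + 1 := ⟨n - 1, by omega⟩
    exact main p
  · apply le_antisymm
    · refine Submodule.span_le.2 ?_
      rintro x ⟨a, -, b, -, rfl⟩
      have h0 : ⁅a, b⁆ ∈ brT k g 1 := by
        have := lie_brT_brT g hgen 0 0 a (by simp) b (by simp)
        simpa using this
      refine le_trans (le_of_eq rfl : brT k g 1 ≤ brT k g 1) ?_ h0
      refine iSup_le fun w => Submodule.span_le.2 ?_
      rintro x ⟨a', rfl⟩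
      have hofn : (List.ofFn w).foldl (fun y j => ⁅y, g j⁆) a' = ⁅a', g (w 0)⁆ := by
        simp [List.ofFn_succ]
      rw [hofn]
      exact Submodule.mem_iSup_of_mem (w 0) (Submodule.subset_span ⟨a', rfl⟩)
    · refine iSup_le fun i => Submodule.span_le.2 ?_
      rintro x ⟨a, rfl⟩
      exact Submodule.subset_span ⟨a, trivial, g i, trivial, rfl⟩
  · obtain ⟨p, rfl⟩ : ∃ p, n = p + 1 := ⟨n - 1, by omega⟩
    rw [main p, ← lcs_eq p]
    rfl
end

section
/- Let k be a field and A a (not necessarily unital) associative topological k-algebra which is the inverse limit, with the inverse limit topology, of an inversely directed system of finite-dimensional discrete k-algebras, and suppose some finitely generated subalgebra S of A is dense in A. Then: (i) for every n ≥ 1 the two-sided ideal A^n (the k-span of all products of n elements of A) is open in A, and A^n is the closure of S^n; (ii) every k-algebra homomorphism from A to a nilpotent k-algebra B, with B given the discrete topology, is continuous (i.e., its kernel is an open ideal); (iii) if moreover the finite-dimensional algebras in the inverse system are all nilpotent, then every k-algebra homomorphism from A to a finite-dimensional k-algebra B (discrete) is continuous. -/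
set_option linter.unusedSectionVars false
set_option linter.unnecessarySimpa false
set_option linter.unusedVariables false
set_option maxHeartbeats 1000000

/-- `setPow k A T n` is the `k`-subspace of a nonunital associative `k`-algebra `A`
spanned by all products of `n` elements of the subset `T` (written left-bracketed,
which by associativity involves no loss of generality). Taking `T = Set.univ` gives
the ideal `Aⁿ`. -/
def setPow (k A : Type*) [Field k] [NonUnitalRing A] [Module k A]
    (T : Set A) (n : ℕ) : Submodule k A :=
  Submodule.span k {x : A | ∃ (a : A) (l : List A),
    a ∈ T ∧ (∀ b ∈ l, b ∈ T) ∧ l.length + 1 = n ∧ x = l.foldl (· * ·) a}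

namespace BGM

variable {k A : Type*} [Field k] [NonUnitalRing A] [Module k A]
  [SMulCommClass k A A] [IsScalarTower k A A]

theorem mul_foldl (l : List A) (x a : A) :
    x * l.foldl (· * ·) a = l.foldl (· * ·) (x * a) := by
  induction l generalizing a with
  | nil => rfl
  | cons b l ih => simpa [List.foldl_cons, mul_assoc] using ih (a * b)

theorem foldl_gen_mem {T : Set A} {a : A} {l : List A} (ha : a ∈ T)
    (hl : ∀ b ∈ l, b ∈ T) {n : ℕ} (hn : l.length + 1 = n) :
    l.foldl (· * ·) a ∈ setPow k A T n :=
  Submodule.subset_span ⟨a, l, ha, hl, hn, rfl⟩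

theorem setPow_mono {T₁ T₂ : Set A} (h : T₁ ⊆ T₂) (n : ℕ) :
    setPow k A T₁ n ≤ setPow k A T₂ n := by
  apply Submodule.span_mono
  rintro x ⟨a, l, ha, hl, hn, rfl⟩
  exact ⟨a, l, h ha, fun b hb => h (hl b hb), hn, rfl⟩

theorem setPow_one (T : Set A) : setPow k A T 1 = Submodule.span k T := by
  unfold setPow
  congr 1
  ext x
  constructor
  · rintro ⟨a, l, ha, hl, hn, rfl⟩
    have : l = [] := List.length_eq_zero_iff.mp (by omega)
    subst this; exact ha
  · intro hx; exact ⟨x, [], hx, by simp, rfl, rfl⟩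

theorem setPow_univ_one : setPow k A Set.univ 1 = ⊤ := by
  rw [setPow_one, Submodule.span_univ]

/-- multiplying an element of `setPow T n` on the right by an element of `T`. -/
theorem mul_gen_mem_setPow {T : Set A} {n : ℕ} {x t : A}
    (hx : x ∈ setPow k A T n) (ht : t ∈ T) : x * t ∈ setPow k A T (n + 1) := by
  induction hx using Submodule.span_induction with
  | mem y hy =>
    obtain ⟨a, l, ha, hl, hn, rfl⟩ := hy
    rw [show l.foldl (· * ·) a * t = (l ++ [t]).foldl (· * ·) a by
      simp [List.foldl_append]]
    exact foldl_gen_mem ha (by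
      intro b hb
      rcases List.mem_append.mp hb with h | h
      · exact hl b h
      · simp at h; subst h; exact ht) (by simp; omega)
  | zero => simpa using Submodule.zero_mem _
  | add y z _ _ hy hz => rw [add_mul]; exact Submodule.add_mem _ hy hz
  | smul c y _ hy => rw [smul_mul_assoc]; exact Submodule.smul_mem _ c hy

theorem mul_span_mem_setPow {T : Set A} {n : ℕ} {x t : A}
    (hx : x ∈ setPow k A T n) (ht : t ∈ Submodule.span k T) :
    x * t ∈ setPow k A T (n + 1) := by
  induction ht using Submodule.span_induction with
  | mem y hy => exact mul_gen_mem_setPow hx hy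
  | zero => simpa using Submodule.zero_mem _
  | add y z _ _ hy hz => rw [mul_add]; exact Submodule.add_mem _ hy hz
  | smul c y _ hy => rw [mul_smul_comm]; exact Submodule.smul_mem _ c hy

theorem foldl_span_mem_setPow {T : Set A} {r : ℕ} {z : A} {l : List A}
    (hz : z ∈ setPow k A T r) (hl : ∀ b ∈ l, b ∈ Submodule.span k T) :
    l.foldl (· * ·) z ∈ setPow k A T (r + l.length) := by
  induction l generalizing z r with
  | nil => simpa using hz
  | cons b l ih =>
    have hzb : z * b ∈ setPow k A T (r + 1) :=
      mul_span_mem_setPow hz (hl b (by simp))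
    have := ih hzb (fun c hc => hl c (by simp [hc]))
    rw [List.foldl_cons]
    convert this using 2
    simp [List.length_cons]; omega

/-- products of `n` elements of the span of `T` lie in `setPow T n`. -/
theorem setPow_span_le (T : Set A) (n : ℕ) :
    setPow k A (↑(Submodule.span k T) : Set A) n ≤ setPow k A T n := by
  rw [setPow]
  apply Submodule.span_le.mpr
  rintro x ⟨a, l, ha, hl, hn, rfl⟩
  have h1 : a ∈ setPow k A T 1 := by rw [setPow_one]; exact ha
  have := foldl_span_mem_setPow h1 (fun b hb => hl b hb)
  rwa [show 1 + l.length = n by omega] at this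

theorem setPow_mul_mem {T : Set A} {m n : ℕ} {x y : A} (hm : 1 ≤ m)
    (hx : x ∈ setPow k A T m) (hy : y ∈ setPow k A T n) :
    x * y ∈ setPow k A T (m + n) := by
  induction hy using Submodule.span_induction with
  | mem y hy =>
    obtain ⟨a, l, ha, hl, hn, rfl⟩ := hy
    rw [mul_foldl]
    have hxa : x * a ∈ setPow k A T (m + 1) := mul_gen_mem_setPow hx ha
    have := foldl_span_mem_setPow hxa (fun b hb => Submodule.subset_span (hl b hb))
    rwa [show m + 1 + l.length = m + n by omega] at this
  | zero => simpa using Submodule.zero_mem _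
  | add y z _ _ hy hz => rw [mul_add]; exact Submodule.add_mem _ hy hz
  | smul c y _ hy => rw [mul_smul_comm]; exact Submodule.smul_mem _ c hy

/-- `A^m ≤ A^n` for `m ≥ n ≥ 1`. -/
theorem setPow_univ_antitone {m n : ℕ} (hn : 1 ≤ n) (hmn : n ≤ m) :
    setPow k A Set.univ m ≤ setPow k A Set.univ n := by
  rw [setPow]
  apply Submodule.span_le.mpr
  rintro x ⟨a, l, -, -, hn', rfl⟩
  rw [show l = l.take (m - n) ++ l.drop (m - n) from (List.take_append_drop _ l).symm,
    List.foldl_append]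
  exact foldl_gen_mem (Set.mem_univ _) (fun b _ => Set.mem_univ b)
    (by simp [List.length_drop]; omega)

theorem map_foldl {B : Type*} [NonUnitalRing B] [Module k B]
    (φ : A →ₙₐ[k] B) (l : List A) (a : A) :
    φ (l.foldl (· * ·) a) = (l.map φ).foldl (· * ·) (φ a) := by
  induction l generalizing a with
  | nil => rfl
  | cons b l ih => simp [List.foldl_cons, ih, map_mul]

theorem map_setPow {B : Type*} [NonUnitalRing B] [Module k B]
    [SMulCommClass k B B] [IsScalarTower k B B]
    (φ : A →ₙₐ[k] B) (T : Set A) (n : ℕ) :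
    Submodule.map (φ : A →ₗ[k] B) (setPow k A T n) = setPow k B (φ '' T) n := by
  have : (Submodule.map (φ : A →ₗ[k] B) (setPow k A T n) : Submodule k B)
      = Submodule.span k (φ '' {x : A | ∃ (a : A) (l : List A),
        a ∈ T ∧ (∀ b ∈ l, b ∈ T) ∧ l.length + 1 = n ∧ x = l.foldl (· * ·) a}) :=
    Submodule.map_span _ _
  rw [this]
  congr 1
  ext y
  constructor
  · rintro ⟨x, ⟨a, l, ha, hl, hn, rfl⟩, rfl⟩
    exact ⟨φ a, l.map φ, ⟨a, ha, rfl⟩, by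
      intro b hb
      obtain ⟨c, hc, rfl⟩ := List.mem_map.mp hb
      exact ⟨c, hl c hc, rfl⟩, by simpa using hn, map_foldl φ l a⟩
  · rintro ⟨a', l', ha', hl', hn, rfl⟩
    obtain ⟨a, ha, rfl⟩ := ha'
    have : ∀ l' : List B, (∀ b ∈ l', b ∈ φ '' T) →
        ∃ l : List A, (∀ b ∈ l, b ∈ T) ∧ l.map φ = l' := by
      intro l'
      induction l' with
      | nil => exact fun _ => ⟨[], by simp, rfl⟩
      | cons b' l' ih =>
        intro h
        obtain ⟨l, hl, rfl⟩ := ih (fun c hc => h c (by simp [hc]))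
        obtain ⟨b, hb, rfl⟩ := h b' (by simp)
        refine ⟨b :: l, ?_, rfl⟩
        intro c hc
        rcases List.mem_cons.mp hc with rfl | hc'
        · exact hb
        · exact hl c hc'
    obtain ⟨l, hl, rfl⟩ := this l' hl'
    exact ⟨l.foldl (· * ·) a, ⟨a, l, ha, hl, by simpa using hn, rfl⟩, map_foldl φ l a⟩


theorem exists_minimal_of_chains_bounded {α : Type*} [PartialOrder α] (s : Set α)
    (hs : ∀ c ⊆ s, IsChain (· ≤ ·) c → c.Nonempty → ∃ lb ∈ s, ∀ z ∈ c, lb ≤ z)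
    (x : α) (hx : x ∈ s) :
    ∃ m ∈ s, ∀ z ∈ s, z ≤ m → z = m := by
  have key := zorn_le_nonempty₀ (α := αᵒᵈ) (OrderDual.ofDual ⁻¹' s) ?_ (OrderDual.toDual x) hx
  · obtain ⟨m, -, hmS, hmmax⟩ := key
    refine ⟨OrderDual.ofDual m, hmS, fun z hz hzm => ?_⟩
    have : m ≤ OrderDual.toDual z := hzm
    exact le_antisymm hzm (hmmax hz this)
  · intro c hcs hchain y hyc
    obtain ⟨lb, hlbs, hlb⟩ := hs (OrderDual.ofDual '' c)
      (by rintro z ⟨w, hw, rfl⟩; exact hcs hw)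
      (by
        rintro z ⟨w, hw, rfl⟩ z' ⟨w', hw', rfl⟩ hne
        rcases hchain hw hw' (fun h => hne (congrArg _ h)) with h | h
        · exact Or.inr h
        · exact Or.inl h)
      ⟨OrderDual.ofDual y, y, hyc, rfl⟩
    exact ⟨OrderDual.toDual lb, hlbs, fun z hz => hlb _ ⟨z, hz, rfl⟩⟩


section Min
variable {k V : Type*} [Field k] [AddCommGroup V] [Module k V]

/-- In a finite-dimensional space, a directed family of submodules has a least member. -/
theorem exists_min_submodule [FiniteDimensional k V] {J : Type*} [Nonempty J]
    (U : J → Submodule k V) (hdir : ∀ a b, ∃ c, U c ≤ U a ∧ U c ≤ U b) :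
    ∃ a₀, ∀ a, U a₀ ≤ U a := by
  have hne : (Set.range fun a => Module.finrank k (U a)).Nonempty := Set.range_nonempty _
  obtain ⟨a₀, ha₀⟩ : ∃ a₀, Module.finrank k (U a₀) =
      sInf (Set.range fun a => Module.finrank k (U a)) := by
    obtain ⟨a₀, h⟩ := Nat.sInf_mem hne
    exact ⟨a₀, by rw [← h]⟩
  refine ⟨a₀, fun a => ?_⟩
  obtain ⟨c, hc₀, hca⟩ := hdir a₀ a
  have h1 : Module.finrank k (U a₀) ≤ Module.finrank k (U c) := by
    rw [ha₀]; exact Nat.sInf_le ⟨c, rfl⟩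
  have : U c = U a₀ := Submodule.eq_of_le_of_finrank_le hc₀ h1
  rw [← this]; exact hca

/-- In a finite-dimensional space, a directed family of nonempty affine subspaces has a
least member. -/
theorem exists_min_affine [FiniteDimensional k V] {J : Type*} [Nonempty J]
    (F : J → AffineSubspace k V) (hne : ∀ a, (F a : Set V).Nonempty)
    (hdir : ∀ a b, ∃ c, F c ≤ F a ∧ F c ≤ F b) :
    ∃ a₀, ∀ a, F a₀ ≤ F a := by
  have hnon : (Set.range fun a => Module.finrank k (F a).direction).Nonempty :=
    Set.range_nonempty _
  obtain ⟨a₀, ha₀⟩ : ∃ a₀, Module.finrank k (F a₀).direction =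
      sInf (Set.range fun a => Module.finrank k (F a).direction) := by
    obtain ⟨a₀, h⟩ := Nat.sInf_mem hnon
    exact ⟨a₀, by rw [← h]⟩
  refine ⟨a₀, fun a => ?_⟩
  obtain ⟨c, hc₀, hca⟩ := hdir a₀ a
  have hd : (F c).direction ≤ (F a₀).direction := AffineSubspace.direction_le hc₀
  have h1 : Module.finrank k (F a₀).direction ≤ Module.finrank k (F c).direction := by
    rw [ha₀]; exact Nat.sInf_le ⟨c, rfl⟩
  have hdeq : (F c).direction = (F a₀).direction :=
    Submodule.eq_of_le_of_finrank_le hd h1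
  have : F c = F a₀ := by
    apply AffineSubspace.ext_of_direction_eq hdeq
    obtain ⟨x, hx⟩ := hne c
    exact ⟨x, hx, hc₀ hx⟩
  rw [← this]; exact hca

end Min

section Thread
variable {k : Type*} [Field k] {ι : Type*} [Preorder ι] [IsDirected ι (· ≤ ·)] [Nonempty ι]

theorem exists_thread (E : ι → Type*) [∀ i, AddCommGroup (E i)] [∀ i, Module k (E i)]
    [∀ i, FiniteDimensional k (E i)]
    (F : ∀ i j, i ≤ j → E j →ₗ[k] E i)
    (T : ∀ i, AffineSubspace k (E i))
    (hne : ∀ i, ((T i : Set (E i))).Nonempty)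
    (hstab : ∀ i j (h : i ≤ j), ∀ x ∈ T j, F i j h x ∈ T i)
    (hcompat : ∀ (i j l : ι) (hij : i ≤ j) (hjl : j ≤ l), ∀ x ∈ T l,
      F i j hij (F j l hjl x) = F i l (hij.trans hjl) x)
    (hrefl : ∀ i, ∀ x ∈ T i, F i i le_rfl x = x) :
    ∃ g : ∀ i, E i, (∀ i, g i ∈ T i) ∧ ∀ i j (h : i ≤ j), F i j h (g j) = g i := by
  classical
  let S : Set (∀ i, AffineSubspace k (E i)) := {D | (∀ i, D i ≤ T i) ∧
    (∀ i, (D i : Set (E i)).Nonempty) ∧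
    ∀ i j (h : i ≤ j), ∀ x ∈ D j, F i j h x ∈ D i}
  have hTS : T ∈ S := ⟨fun i => le_rfl, hne, hstab⟩
  -- every nonempty chain in S has a lower bound in S
  have hchainlb : ∀ c ⊆ S, IsChain (· ≤ ·) c → c.Nonempty →
      ∃ lb ∈ S, ∀ z ∈ c, lb ≤ z := by
    intro c hcS hchain hcne
    haveI : Nonempty c := hcne.to_subtype
    have hdir : ∀ i : ι, ∀ a b : c, ∃ d : c, (d.1 : ∀ i, AffineSubspace k (E i)) i ≤ a.1 i ∧
        d.1 i ≤ b.1 i := by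
      intro i a b
      by_cases hab : a.1 = b.1
      · exact ⟨a, le_rfl, hab ▸ le_rfl⟩
      · rcases hchain a.2 b.2 hab with h | h
        · exact ⟨a, le_rfl, h i⟩
        · exact ⟨b, h i, le_rfl⟩
    have hmin : ∀ i : ι, ∃ d₀ : c, ∀ d : c, (d₀.1 : ∀ i, AffineSubspace k (E i)) i ≤ d.1 i :=
      fun i => exists_min_affine (fun d : c => d.1 i) (fun d => (hcS d.2).2.1 i) (hdir i)
    choose Dm hDm using hmin
    refine ⟨fun i => (Dm i).1 i, ⟨fun i => (hcS (Dm i).2).1 i,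
      fun i => (hcS (Dm i).2).2.1 i, ?_⟩, fun z hz i => hDm i ⟨z, hz⟩⟩
    intro i j h x hx
    obtain ⟨R, hRi, hRj⟩ : ∃ R : c, (R.1 : ∀ i, AffineSubspace k (E i)) i ≤ (Dm i).1 i ∧
        R.1 j ≤ (Dm j).1 j := by
      by_cases hab : (Dm i).1 = (Dm j).1
      · exact ⟨Dm i, le_rfl, hab ▸ le_rfl⟩
      · rcases hchain (Dm i).2 (Dm j).2 hab with h' | h'
        · exact ⟨Dm i, le_rfl, h' j⟩
        · exact ⟨Dm j, h' i, le_rfl⟩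
    have hRi' : (R.1 : ∀ i, AffineSubspace k (E i)) i = (Dm i).1 i :=
      le_antisymm hRi (hDm i R)
    have hRj' : (R.1 : ∀ i, AffineSubspace k (E i)) j = (Dm j).1 j :=
      le_antisymm hRj (hDm j R)
    have hx2 : x ∈ (Dm j).1 j := hx
    rw [← hRj'] at hx2
    show F i j h x ∈ (Dm i).1 i
    rw [← hRi']
    exact (hcS R.2).2.2 i j h x hx2
  obtain ⟨M, hMS, hMmin⟩ := exists_minimal_of_chains_bounded S hchainlb T hTS
  have hM1 : ∀ i, M i ≤ T i := hMS.1
  have hM2 : ∀ i, (M i : Set (E i)).Nonempty := hMS.2.1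
  have hM3 : ∀ i j (h : i ≤ j), ∀ x ∈ M j, F i j h x ∈ M i := hMS.2.2
  -- Step A: transition maps between the M i are surjective
  have hsurj : ∀ i j (h : i ≤ j), ∀ y ∈ M i, ∃ x ∈ M j, F i j h x = y := by
    have hminfam : ∀ i : ι, ∃ j₀ : {j // i ≤ j}, ∀ j : {j // i ≤ j},
        (M j₀.1).map (F i j₀.1 j₀.2).toAffineMap ≤ (M j.1).map (F i j.1 j.2).toAffineMap := by
      intro i
      haveI : Nonempty {j // i ≤ j} := ⟨⟨i, le_rfl⟩⟩
      apply exists_min_affine (fun j : {j // i ≤ j} => (M j.1).map (F i j.1 j.2).toAffineMap)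
      · intro j
        rw [AffineSubspace.coe_map]
        exact (hM2 j.1).image _
      · intro a b
        obtain ⟨m, hma, hmb⟩ := exists_ge_ge a.1 b.1
        refine ⟨⟨m, a.2.trans hma⟩, ?_, ?_⟩ <;>
        · intro z hz
          rw [AffineSubspace.mem_map] at hz ⊢
          obtain ⟨x, hx, rfl⟩ := hz
          first
          | exact ⟨F a.1 m hma x, hM3 _ _ _ x hx,
              (hcompat i a.1 m a.2 hma x (hM1 m hx)).symm ▸ rfl⟩
          | exact ⟨F b.1 m hmb x, hM3 _ _ _ x hx,
              (hcompat i b.1 m b.2 hmb x (hM1 m hx)).symm ▸ rfl⟩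
    choose jst hjst using hminfam
    set M' : ∀ i, AffineSubspace k (E i) :=
      fun i => (M (jst i).1).map (F i (jst i).1 (jst i).2).toAffineMap with hM'
    have hM'leM : ∀ i, M' i ≤ M i := by
      intro i
      refine (hjst i ⟨i, le_rfl⟩).trans ?_
      intro z hz
      rw [AffineSubspace.mem_map] at hz
      obtain ⟨x, hx, rfl⟩ := hz
      exact hM3 i i le_rfl x hx
    have hM'S : M' ∈ S := by
      refine ⟨fun i => (hM'leM i).trans (hM1 i), ?_, ?_⟩
      · intro i
        rw [hM', AffineSubspace.coe_map]
        exact (hM2 _).image _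
      · intro i j h x hx
        -- show F i j x ∈ M' i
        obtain ⟨m, hm1, hm2⟩ := exists_ge_ge (jst i).1 j
        have hx' : x ∈ (M m).map (F j m hm2).toAffineMap := hjst j ⟨m, hm2⟩ hx
        rw [AffineSubspace.mem_map] at hx'
        obtain ⟨y, hy, rfl⟩ := hx'
        have hyT : y ∈ T m := hM1 m hy
        have e1 : F i j h ((F j m hm2).toAffineMap y) = F i m (h.trans hm2) y :=
          hcompat i j m h hm2 y hyT
        have e2 : F i m (h.trans hm2) y
            = F i (jst i).1 (jst i).2 (F (jst i).1 m hm1 y) := by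
          rw [hcompat i (jst i).1 m (jst i).2 hm1 y hyT]
        rw [e1, e2]
        exact AffineSubspace.mem_map.mpr ⟨F (jst i).1 m hm1 y, hM3 _ _ _ y hy, rfl⟩
    have : M' = M := hMmin M' hM'S hM'leM
    intro i j h y hy
    have : y ∈ M' i := this ▸ hy
    have : y ∈ (M j).map (F i j h).toAffineMap := hjst i ⟨j, h⟩ this
    rw [AffineSubspace.mem_map] at this
    obtain ⟨x, hx, hxy⟩ := this
    exact ⟨x, hx, hxy⟩
  -- Step B: each M i is a singleton
  have hsingle : ∀ i₀ : ι, ∃ p, (M i₀ : Set (E i₀)) = {p} := by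
    intro i₀
    obtain ⟨p, hp⟩ := hM2 i₀
    -- the fibers over p
    let G : ∀ j, i₀ ≤ j → AffineSubspace k (E j) := fun j hj =>
      (M j) ⊓ AffineSubspace.comap (F i₀ j hj).toAffineMap
        (AffineSubspace.mk' p (⊥ : Submodule k (E i₀)))
    have hGmem : ∀ j (hj : i₀ ≤ j) (x : E j), x ∈ G j hj ↔ x ∈ M j ∧ F i₀ j hj x = p := by
      intro j hj x
      rw [AffineSubspace.mem_inf_iff]
      constructor
      · rintro ⟨h1, h2⟩
        rw [AffineSubspace.mem_comap, AffineSubspace.mem_mk'] at h2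
        simp only [Submodule.mem_bot, vsub_eq_sub, sub_eq_zero] at h2
        exact ⟨h1, h2⟩
      · rintro ⟨h1, h2⟩
        refine ⟨h1, ?_⟩
        rw [AffineSubspace.mem_comap, AffineSubspace.mem_mk']
        simp [vsub_eq_sub, h2]
    have hGne : ∀ j (hj : i₀ ≤ j), ((G j hj : Set (E j))).Nonempty := by
      intro j hj
      obtain ⟨x, hx, hfx⟩ := hsurj i₀ j hj p hp
      exact ⟨x, (hGmem j hj x).mpr ⟨hx, hfx⟩⟩
    have hminfam : ∀ i : ι, ∃ j₀ : {j // i ≤ j ∧ i₀ ≤ j}, ∀ j : {j // i ≤ j ∧ i₀ ≤ j},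
        (G j₀.1 j₀.2.2).map (F i j₀.1 j₀.2.1).toAffineMap ≤
          (G j.1 j.2.2).map (F i j.1 j.2.1).toAffineMap := by
      intro i
      obtain ⟨m₀, hm₀i, hm₀i₀⟩ := exists_ge_ge i i₀
      haveI : Nonempty {j // i ≤ j ∧ i₀ ≤ j} := ⟨⟨m₀, hm₀i, hm₀i₀⟩⟩
      apply exists_min_affine
        (fun j : {j // i ≤ j ∧ i₀ ≤ j} =>
          (G j.1 j.2.2).map (F i j.1 j.2.1).toAffineMap)
      · intro j
        rw [AffineSubspace.coe_map]
        exact (hGne j.1 j.2.2).image _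
      · intro a b
        obtain ⟨m, hma, hmb⟩ := exists_ge_ge a.1 b.1
        have hmi : i ≤ m := a.2.1.trans hma
        have hmi₀ : i₀ ≤ m := a.2.2.trans hma
        refine ⟨⟨m, hmi, hmi₀⟩, ?_, ?_⟩
        · intro z hz
          rw [AffineSubspace.mem_map] at hz ⊢
          obtain ⟨x, hx, rfl⟩ := hz
          obtain ⟨hxM, hxp⟩ := (hGmem m hmi₀ x).mp hx
          have hxT : x ∈ T m := hM1 m hxM
          refine ⟨F a.1 m hma x, (hGmem a.1 a.2.2 _).mpr
            ⟨hM3 _ _ _ x hxM, ?_⟩, (hcompat i a.1 m a.2.1 hma x hxT).symm ▸ rfl⟩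
          rw [hcompat i₀ a.1 m a.2.2 hma x hxT, hxp]
        · intro z hz
          rw [AffineSubspace.mem_map] at hz ⊢
          obtain ⟨x, hx, rfl⟩ := hz
          obtain ⟨hxM, hxp⟩ := (hGmem m hmi₀ x).mp hx
          have hxT : x ∈ T m := hM1 m hxM
          refine ⟨F b.1 m hmb x, (hGmem b.1 b.2.2 _).mpr
            ⟨hM3 _ _ _ x hxM, ?_⟩, (hcompat i b.1 m b.2.1 hmb x hxT).symm ▸ rfl⟩
          rw [hcompat i₀ b.1 m b.2.2 hmb x hxT, hxp]
    choose jst hjst using hminfam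
    set N : ∀ i, AffineSubspace k (E i) := fun i =>
      (G (jst i).1 (jst i).2.2).map (F i (jst i).1 (jst i).2.1).toAffineMap with hN
    have hNleM : ∀ i, N i ≤ M i := by
      intro i
      intro z hz
      rw [AffineSubspace.mem_map] at hz
      obtain ⟨x, hx, rfl⟩ := hz
      exact hM3 _ _ _ x ((hGmem _ _ x).mp hx).1
    have hNS : N ∈ S := by
      refine ⟨fun i => (hNleM i).trans (hM1 i), ?_, ?_⟩
      · intro i
        rw [hN, AffineSubspace.coe_map]
        exact (hGne _ _).image _
      · intro i j h x hx
        obtain ⟨m, hm1, hm2⟩ := exists_ge_ge (jst i).1 j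
        have hmi₀ : i₀ ≤ m := (jst i).2.2.trans hm1
        have hx' : x ∈ (G m hmi₀).map (F j m hm2).toAffineMap :=
          hjst j ⟨m, hm2, hmi₀⟩ hx
        rw [AffineSubspace.mem_map] at hx'
        obtain ⟨y, hy, rfl⟩ := hx'
        obtain ⟨hyM, hyp⟩ := (hGmem m hmi₀ y).mp hy
        have hyT : y ∈ T m := hM1 m hyM
        have e1 : F i j h ((F j m hm2).toAffineMap y) = F i m (h.trans hm2) y :=
          hcompat i j m h hm2 y hyT
        have e2 : F i m (h.trans hm2) y
            = F i (jst i).1 (jst i).2.1 (F (jst i).1 m hm1 y) := by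
          rw [hcompat i (jst i).1 m (jst i).2.1 hm1 y hyT]
        rw [e1, e2]
        refine AffineSubspace.mem_map.mpr ⟨F (jst i).1 m hm1 y,
          (hGmem _ _ _).mpr ⟨hM3 _ _ _ y hyM, ?_⟩, rfl⟩
        rw [hcompat i₀ (jst i).1 m (jst i).2.2 hm1 y hyT, hyp]
    have hNM : N = M := hMmin N hNS hNleM
    refine ⟨p, Set.eq_singleton_iff_unique_mem.mpr ⟨hp, ?_⟩⟩
    intro q hq
    have : q ∈ N i₀ := hNM ▸ hq
    rw [hN, AffineSubspace.mem_map] at this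
    obtain ⟨x, hx, rfl⟩ := this
    exact ((hGmem _ _ x).mp hx).2
  -- Step C: assemble the thread
  choose g hg using hsingle
  refine ⟨g, fun i => ?_, fun i j h => ?_⟩
  · have : g i ∈ (M i : Set (E i)) := by rw [hg i]; rfl
    exact hM1 i this
  · have hgj : g j ∈ (M j : Set (E j)) := by rw [hg j]; rfl
    have : F i j h (g j) ∈ (M i : Set (E i)) := hM3 i j h (g j) hgj
    rw [hg i] at this
    exact this

end Thread

section Nil
variable {k A : Type*} [Field k] [NonUnitalRing A] [Module k A]
  [SMulCommClass k A A] [IsScalarTower k A A]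
/-- If `T` is closed under multiplication, `setPow T (n+2) ≤ setPow T (n+1)`. -/
theorem setPow_succ_le {T : Set A} (hT : ∀ x ∈ T, ∀ y ∈ T, x * y ∈ T) (n : ℕ) :
    setPow k A T (n + 2) ≤ setPow k A T (n + 1) := by
  apply Submodule.span_le.mpr
  rintro x ⟨a, l, ha, hl, hn, rfl⟩
  match l, hn with
  | b :: l', hn =>
    rw [List.foldl_cons]
    exact foldl_gen_mem (hT a ha b (hl b (by simp)))
      (fun c hc => hl c (by simp [hc])) (by simp at hn ⊢; omega)

theorem setPow_step {T : Set A} {a b : ℕ}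
    (h : setPow k A T (a + 1) = setPow k A T (b + 1)) :
    setPow k A T (a + 2) = setPow k A T (b + 2) := by
  have key : ∀ {a b : ℕ}, setPow k A T (a + 1) = setPow k A T (b + 1) →
      setPow k A T (a + 2) ≤ setPow k A T (b + 2) := by
    intro a b h
    apply Submodule.span_le.mpr
    rintro x ⟨c, l, hc, hl, hn, rfl⟩
    have hlne : l ≠ [] := by rintro rfl; simp at hn
    have hsplit : l = l.dropLast ++ [l.getLast hlne] := (List.dropLast_append_getLast hlne).symm
    have hxe : l.foldl (· * ·) c
        = l.dropLast.foldl (· * ·) c * l.getLast hlne := by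
      conv_lhs => rw [hsplit]
      rw [List.foldl_append]
      simp
    rw [hxe]
    have h1 : l.dropLast.foldl (· * ·) c ∈ setPow k A T (a + 1) :=
      foldl_gen_mem hc (fun d hd => hl d (List.dropLast_subset l hd))
        (by rw [List.length_dropLast]; omega)
    rw [h] at h1
    exact mul_gen_mem_setPow h1 (hl _ (List.getLast_mem hlne))
  exact le_antisymm (key h) (key h.symm)

theorem setPow_stabilize {T : Set A} (hT : ∀ x ∈ T, ∀ y ∈ T, x * y ∈ T)
    [FiniteDimensional k A] :
    ∃ m : ℕ, ∀ j : ℕ, setPow k A T (m + j + 1) = setPow k A T (m + 1) := by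
  -- the sequence n ↦ setPow T (n+1) is decreasing; finrank must stabilize somewhere
  have hdec : ∀ n : ℕ, setPow k A T (n + 2) ≤ setPow k A T (n + 1) := setPow_succ_le hT
  by_cases hex : ∃ m : ℕ, setPow k A T (m + 2) = setPow k A T (m + 1)
  · obtain ⟨m, hm⟩ := hex
    refine ⟨m, fun j => ?_⟩
    induction j with
    | zero => rfl
    | succ j ih =>
      have : setPow k A T (m + j + 2) = setPow k A T (m + 2) := setPow_step ih
      rw [show m + (j+1) + 1 = m + j + 2 by omega, this, hm]
  · exfalso
    push_neg at hex
    have hlt : ∀ n : ℕ, Module.finrank k (setPow k A T (n + 2))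
        < Module.finrank k (setPow k A T (n + 1)) := by
      intro n
      exact Submodule.finrank_lt_finrank_of_lt (lt_of_le_of_ne (hdec n) (hex n))
    have : ∀ n : ℕ, Module.finrank k (setPow k A T (n + 1)) + n
        ≤ Module.finrank k (setPow k A T 1) := by
      intro n
      induction n with
      | zero => simp
      | succ n ih =>
        have h2 := hlt n
        have h3 : Module.finrank k (setPow k A T (n + 1 + 1))
            = Module.finrank k (setPow k A T (n + 2)) := by norm_num
        rw [h3]
        omega
    have := this (Module.finrank k (setPow k A T 1) + 1)
    omega

/-- A finite-dimensional algebra all of whose elements are (left) quasi-regular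
is nilpotent. -/
theorem nilpotent_of_quasiregular [FiniteDimensional k A] (D : Set A)
    (hspan : ((Submodule.span k D : Submodule k A) : Set A) = D)
    (hmul : ∀ x ∈ D, ∀ y ∈ D, x * y ∈ D)
    (hqr : ∀ x ∈ D, ∃ y ∈ D, x + y + y * x = 0) :
    ∃ m, 1 ≤ m ∧ setPow k A D m = ⊥ := by
  classical
  obtain ⟨m, hstab⟩ := setPow_stabilize (k := k) hmul
  set E : Submodule k A := setPow k A D (m + 1) with hE
  refine ⟨m + 1, by omega, ?_⟩
  by_contra hEne
  -- E is idempotent-ish: E ≤ span of products of two elements of E, etc.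
  have hEsp : ∀ j, setPow k A D (m + j + 1) = E := fun j => hstab j
  have hmulE : ∀ x ∈ E, ∀ y ∈ E, x * y ∈ E := by
    intro x hx y hy
    have := setPow_mul_mem (by omega) hx hy
    rw [show m + 1 + (m + 1) = m + (m + 1) + 1 by omega, hEsp (m+1)] at this
    exact this
  have hDE : ∀ d ∈ Submodule.span k D, ∀ x ∈ E, d * x ∈ E := by
    intro d hd x hx
    have hd1 : d ∈ setPow k A D 1 := by rw [setPow_one]; exact hd
    have := setPow_mul_mem (le_refl 1) hd1 hx
    rw [show 1 + (m + 1) = m + 1 + 1 by omega, hEsp 1] at this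
    exact this
  have hdown : ∀ n : ℕ, setPow k A D (n + 1) ≤ setPow k A D 1 := by
    intro n
    induction n with
    | zero => exact le_rfl
    | succ n ih => exact (setPow_succ_le hmul n).trans ih
  have hEleD : ∀ x ∈ E, x ∈ D := by
    intro x hx
    rw [← hspan, ← setPow_one (k := k)]
    exact hdown m hx
  -- E is contained in the span of products of two of its elements
  have hEsplit : E ≤ Submodule.span k {z : A | ∃ x ∈ E, ∃ y ∈ E, z = x * y} := by
    have hfold : setPow k A D (m + (m + 1) + 1) = E := hEsp (m + 1)
    conv_lhs => rw [← hfold]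
    apply Submodule.span_le.mpr
    rintro z ⟨a, l, ha, hl, hn, rfl⟩
    have hlen : l.length = 2 * m + 1 := by omega
    have hsp : l = l.take m ++ l.drop m := (List.take_append_drop m l).symm
    have hl2len : (l.drop m).length = m + 1 := by
      rw [List.length_drop]; omega
    obtain ⟨c, l₂, hc⟩ : ∃ c l₂, l.drop m = c :: l₂ := by
      cases hdrop : l.drop m with
      | nil => rw [hdrop] at hl2len; simp at hl2len
      | cons c l₂ => exact ⟨c, l₂, rfl⟩
    have hw : (l.take m).foldl (· * ·) a ∈ E := by
      rw [hE]
      apply foldl_gen_mem ha (fun d hd => hl d (List.take_subset m l hd))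
      rw [List.length_take]; omega
    have hy : l₂.foldl (· * ·) c ∈ E := by
      rw [hE]
      apply foldl_gen_mem (hl c (by rw [hsp, hc]; simp))
        (fun d hd => hl d (by rw [hsp, hc]; simp [hd]))
      have := hl2len
      rw [hc] at this
      simp at this
      omega
    have hzeq : l.foldl (· * ·) a
        = ((l.take m).foldl (· * ·) a) * (l₂.foldl (· * ·) c) := by
      conv_lhs => rw [hsp, hc]
      rw [List.foldl_append, List.foldl_cons, mul_foldl]
    exact Submodule.subset_span ⟨_, hw, _, hy, hzeq⟩
  -- the family of "good" submodules
  let Good : Submodule k A → Prop := fun L => L ≤ E ∧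
    (∀ d ∈ Submodule.span k D, ∀ y ∈ L, d * y ∈ L) ∧ ∃ e ∈ E, ∃ y ∈ L, e * y ≠ 0
  have hGoodE : Good E := by
    refine ⟨le_rfl, fun d hd y hy => hDE d hd y hy, ?_⟩
    by_contra hnone
    push_neg at hnone
    apply hEne
    apply le_bot_iff.mp
    refine le_trans hEsplit ?_
    apply Submodule.span_le.mpr
    rintro z ⟨x', hx', y', hy', rfl⟩
    rw [SetLike.mem_coe, Submodule.mem_bot]
    exact hnone x' hx' y' hy'
  -- a minimal good submodule
  obtain ⟨L₀, hL₀good, hL₀min⟩ : ∃ L₀, Good L₀ ∧ ∀ L, Good L → L ≤ L₀ → L = L₀ := by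
    have hne2 : {r | ∃ L, Good L ∧ Module.finrank k L = r}.Nonempty := ⟨_, E, hGoodE, rfl⟩
    obtain ⟨L₀, hL₀, hrk⟩ : ∃ L₀, Good L₀ ∧ Module.finrank k L₀
        = sInf {r | ∃ L, Good L ∧ Module.finrank k L = r} := by
      obtain ⟨L₀, h1, h2⟩ := Nat.sInf_mem hne2
      exact ⟨L₀, h1, by rw [h2]⟩
    refine ⟨L₀, hL₀, fun L hL hle => ?_⟩
    apply Submodule.eq_of_le_of_finrank_le hle
    rw [hrk]
    exact Nat.sInf_le ⟨L, hL, rfl⟩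
  obtain ⟨e, heE, x, hxL₀, hex⟩ := hL₀good.2.2
  set L₁ : Submodule k A := Submodule.map (LinearMap.mulRight k x) E with hL₁
  have hL₁leL₀ : L₁ ≤ L₀ := by
    rintro z hz
    rw [hL₁, Submodule.mem_map] at hz
    obtain ⟨e', he', rfl⟩ := hz
    rw [LinearMap.mulRight_apply]
    exact hL₀good.2.1 e' (Submodule.subset_span (hEleD e' he')) x hxL₀
  have hL₁good : Good L₁ := by
    refine ⟨?_, ?_, ?_⟩
    · rintro z hz
      rw [hL₁, Submodule.mem_map] at hz
      obtain ⟨e', he', rfl⟩ := hz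
      rw [LinearMap.mulRight_apply]
      exact hmulE e' he' x (hL₀good.1 hxL₀)
    · intro d hd y hy
      rw [hL₁, Submodule.mem_map] at hy
      obtain ⟨e', he', rfl⟩ := hy
      rw [hL₁, Submodule.mem_map]
      refine ⟨d * e', hDE d hd e' he', ?_⟩
      rw [LinearMap.mulRight_apply, LinearMap.mulRight_apply, mul_assoc]
    · by_contra hnone
      push_neg at hnone
      apply hex
      have hkill : ∀ z ∈ Submodule.span k {z : A | ∃ x' ∈ E, ∃ y' ∈ E, z = x' * y'},
          z * x = 0 := by
        intro z hz
        induction hz using Submodule.span_induction with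
        | mem w hw =>
          obtain ⟨a', ha', b', hb', rfl⟩ := hw
          rw [mul_assoc]
          exact hnone a' ha' (b' * x)
            (by rw [hL₁, Submodule.mem_map]; exact ⟨b', hb', rfl⟩)
        | zero => simp
        | add y' z' _ _ hy' hz' => rw [add_mul, hy', hz', add_zero]
        | smul c y' _ hy' => rw [smul_mul_assoc, hy', smul_zero]
      exact hkill e (hEsplit heE)
  have hLeq : L₁ = L₀ := hL₀min L₁ hL₁good hL₁leL₀
  have hxL₁ : x ∈ L₁ := by rw [hLeq]; exact hxL₀
  rw [hL₁, Submodule.mem_map] at hxL₁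
  obtain ⟨e₁, he₁E, hx1⟩ := hxL₁
  rw [LinearMap.mulRight_apply] at hx1
  -- quasi-regularity of -e₁ kills x
  have hnegD : -e₁ ∈ D := by
    have h1 : e₁ ∈ Submodule.span k D := Submodule.subset_span (hEleD e₁ he₁E)
    have h2 : -e₁ ∈ ((Submodule.span k D : Submodule k A) : Set A) :=
      Submodule.neg_mem _ h1
    rw [hspan] at h2
    exact h2
  obtain ⟨v, hv, hveq⟩ := hqr (-e₁) hnegD
  have hveq2 : v - e₁ - v * e₁ = 0 := by
    rw [mul_neg] at hveq
    calc v - e₁ - v * e₁ = -e₁ + v + -(v * e₁) := by abel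
    _ = 0 := hveq
  have hx0 : x = 0 := by
    have h0 : (v - e₁ - v * e₁) * x = 0 := by rw [hveq2, zero_mul]
    rw [sub_mul, sub_mul, mul_assoc, hx1] at h0
    have heq : v * x - x - v * x = -x := by abel
    rw [heq] at h0
    exact neg_eq_zero.mp h0
  exact hex (by rw [hx0, mul_zero])

end Nil


section Helpers
variable {k A : Type*} [Field k] [NonUnitalRing A] [Module k A]
  [SMulCommClass k A A] [IsScalarTower k A A]

theorem word_of_mem_closure {T : Set A} {g : A} (hg : g ∈ Subsemigroup.closure T) :
    ∃ (c : A) (lw : List A), c ∈ T ∧ (∀ b ∈ lw, b ∈ T) ∧ g = lw.foldl (· * ·) c := by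
  induction hg using Subsemigroup.closure_induction with
  | mem x hx => exact ⟨x, [], hx, by simp, rfl⟩
  | mul x y hx hy ihx ihy =>
    obtain ⟨c1, l1, hc1, hl1, rfl⟩ := ihx
    obtain ⟨c2, l2, hc2, hl2, rfl⟩ := ihy
    refine ⟨c1, l1 ++ (c2 :: l2), hc1, ?_, ?_⟩
    · intro b hb
      rcases List.mem_append.mp hb with h | h
      · exact hl1 b h
      · rcases List.mem_cons.mp h with rfl | h2
        · exact hc2
        · exact hl2 b h2
    · rw [List.foldl_append, List.foldl_cons, mul_foldl]

theorem foldl_words {T : Set A} : ∀ (l : List A) (a : A),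
    (∀ b ∈ l, ∃ (cb : A) (lb : List A), cb ∈ T ∧ (∀ e ∈ lb, e ∈ T) ∧ b = lb.foldl (· * ·) cb) →
    ∀ (c : A) (lw : List A), c ∈ T → (∀ e ∈ lw, e ∈ T) → a = lw.foldl (· * ·) c →
    ∃ (c' : A) (lw' : List A), c' ∈ T ∧ (∀ e ∈ lw', e ∈ T) ∧
      l.foldl (· * ·) a = lw'.foldl (· * ·) c' ∧ l.length + lw.length ≤ lw'.length := by
  intro l
  induction l with
  | nil =>
    intro a _ c lw hc hlw ha
    exact ⟨c, lw, hc, hlw, by simpa using ha, by simp⟩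
  | cons b l ih =>
    intro a hl c lw hc hlw ha
    obtain ⟨cb, lb, hcb, hlb, rfl⟩ := hl b (by simp)
    have hab : a * (lb.foldl (· * ·) cb) = (lw ++ (cb :: lb)).foldl (· * ·) c := by
      rw [List.foldl_append, List.foldl_cons, ← ha, mul_foldl]
    have hents : ∀ e ∈ lw ++ (cb :: lb), e ∈ T := by
      intro e he
      rcases List.mem_append.mp he with h | h
      · exact hlw e h
      · rcases List.mem_cons.mp h with rfl | h2
        · exact hcb
        · exact hlb e h2
    obtain ⟨c', lw', hc', hlw', heq, hlen⟩ := ih (a * (lb.foldl (· * ·) cb))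
      (fun e he => hl e (by simp [he])) c (lw ++ (cb :: lb)) hc hents hab
    refine ⟨c', lw', hc', hlw', ?_, ?_⟩
    · rw [List.foldl_cons]; exact heq
    · simp only [List.length_append, List.length_cons] at hlen
      simp only [List.length_cons]
      omega

theorem list_eq_ofFn {α : Type*} (l : List α) {m : ℕ} (h : l.length = m) :
    l = List.ofFn (fun q : Fin m => l.get (Fin.cast h.symm q)) := by
  apply List.ext_get (by simp [h])
  intro i h1 h2
  simp [List.get_ofFn]

end Helpers


section QInv
variable {k A : Type*} [Field k] [NonUnitalRing A] [Module k A]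
  [SMulCommClass k A A] [IsScalarTower k A A]

/-- the "circle" operation `x ∘ y = x + y + xy` (so `1 + x∘y = (1+x)(1+y)`). -/
private def circ (x y : A) : A := x + y + x * y

private theorem circ_assoc (x y z : A) : circ (circ x y) z = circ x (circ y z) := by
  unfold circ
  simp only [mul_add, add_mul, mul_assoc]
  abel

private theorem circ_zero (x : A) : circ x 0 = x := by simp [circ]

private theorem zero_circ (x : A) : circ 0 x = x := by simp [circ]

/-- iterated left-bracketed powers -/
private def pw (b : A) : ℕ → A
  | 0 => b
  | t + 1 => pw b t * b

private theorem b_mul_pw (b : A) : ∀ t, b * pw b t = pw b (t + 1)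
  | 0 => rfl
  | t + 1 => by
    show b * (pw b t * b) = pw b (t + 1) * b
    rw [← mul_assoc, b_mul_pw b t]

private theorem pw_mem (b : A) (t : ℕ) : pw b t ∈ setPow k A Set.univ (t + 1) := by
  induction t with
  | zero =>
    exact foldl_gen_mem (l := []) (Set.mem_univ b) (by simp) (by simp)
  | succ t ih =>
    exact mul_gen_mem_setPow ih (Set.mem_univ b)

/-- In a nilpotent algebra every element has a unique two-sided quasi-inverse. -/
theorem exists_unique_qinv (hnil : ∃ n, 1 ≤ n ∧ setPow k A Set.univ n = ⊥) (b : A) :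
    ∃ c, (b + c + b * c = 0 ∧ b + c + c * b = 0) ∧
      ∀ d, (b + d + b * d = 0 ∧ b + d + d * b = 0) → d = c := by
  obtain ⟨n, hn1, hbot⟩ := hnil
  have hpw0 : pw b (n - 1) = 0 := by
    have := pw_mem (k := k) b (n - 1)
    rw [show n - 1 + 1 = n by omega, hbot] at this
    simpa using this
  -- right-handed inverse
  let cseq : ℕ → A := fun m => Nat.rec 0 (fun _ c => -b - b * c) m
  have hcseq_succ : ∀ m, cseq (m + 1) = -b - b * cseq m := fun m => rfl
  let sseq : ℕ → A := fun m => Nat.rec b (fun _ s => -(b * s)) m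
  have hsseq_succ : ∀ m, sseq (m + 1) = -(b * sseq m) := fun m => rfl
  have L1 : ∀ m, b + cseq m + b * cseq m = sseq m := by
    intro m
    induction m with
    | zero => show b + 0 + b * 0 = b; simp
    | succ m ih =>
      rw [hcseq_succ, hsseq_succ, ← ih]
      simp only [mul_add, mul_neg, mul_sub, sub_eq_add_neg, neg_add]
      abel
  have L2 : ∀ m, sseq m = pw b m ∨ sseq m = -pw b m := by
    intro m
    induction m with
    | zero => left; rfl
    | succ m ih =>
      rcases ih with h | h
      · right; rw [hsseq_succ, h, b_mul_pw]
      · left; rw [hsseq_succ, h, mul_neg, b_mul_pw, neg_neg]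
  have hr : b + cseq (n - 1) + b * cseq (n - 1) = 0 := by
    rw [L1]
    rcases L2 (n - 1) with h | h <;> rw [h, hpw0] <;> simp
  -- left-handed inverse
  let cseq' : ℕ → A := fun m => Nat.rec 0 (fun _ c => -b - c * b) m
  have hcseq'_succ : ∀ m, cseq' (m + 1) = -b - cseq' m * b := fun m => rfl
  let sseq' : ℕ → A := fun m => Nat.rec b (fun _ s => -(s * b)) m
  have hsseq'_succ : ∀ m, sseq' (m + 1) = -(sseq' m * b) := fun m => rfl
  have L1' : ∀ m, b + cseq' m + cseq' m * b = sseq' m := by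
    intro m
    induction m with
    | zero => show b + 0 + 0 * b = b; simp
    | succ m ih =>
      rw [hcseq'_succ, hsseq'_succ, ← ih]
      simp only [add_mul, neg_mul, sub_mul, sub_eq_add_neg, neg_add]
      abel
  have L2' : ∀ m, sseq' m = pw b m ∨ sseq' m = -pw b m := by
    intro m
    induction m with
    | zero => left; rfl
    | succ m ih =>
      rcases ih with h | h
      · right; rw [hsseq'_succ, h]; rfl
      · left; rw [hsseq'_succ, h, neg_mul, neg_neg]; rfl
  have hl : b + cseq' (n - 1) + cseq' (n - 1) * b = 0 := by
    rw [L1']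
    rcases L2' (n - 1) with h | h <;> rw [h, hpw0] <;> simp
  -- the two one-sided inverses agree
  set c := cseq (n - 1)
  set c' := cseq' (n - 1)
  have hbc : circ b c = 0 := by show b + c + b * c = 0; exact hr
  have hc'b : circ c' b = 0 := by
    show c' + b + c' * b = 0
    rw [show c' + b + c' * b = b + c' + c' * b by abel]
    exact hl
  have hcc' : c' = c := by
    have : circ (circ c' b) c = circ c' (circ b c) := circ_assoc c' b c
    rw [hbc, hc'b, circ_zero, zero_circ] at this
    exact this.symm
  refine ⟨c, ⟨hr, by rw [← hcc']; exact hl⟩, ?_⟩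
  · intro d hd
    have hbd : circ b d = 0 := hd.1
    have hdb : circ d b = 0 := by
      show d + b + d * b = 0
      rw [show d + b + d * b = b + d + d * b by abel]
      exact hd.2
    have : circ (circ d b) c = circ d (circ b c) := circ_assoc d b c
    rw [hbd] at *
    rw [hdb, hbc, circ_zero, zero_circ] at this
    exact this.symm

end QInv

end BGM
open BGM

/-- Let `A` be a topological nonunital associative `k`-algebra which is the inverse limit
(with the inverse limit topology) of an inversely directed system of finite-dimensional
discrete `k`-algebras `B i`, and suppose the subalgebra generated by some finite subset
`s` of `A` is dense in `A`.  Then: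
(i) for every `n ≥ 1` the ideal `Aⁿ` is open and equals the closure of `Sⁿ`;
(ii) every `k`-algebra homomorphism from `A` to a nilpotent `k`-algebra `C`, given the
discrete topology, is continuous; and
(iii) if all the `B i` are nilpotent, every `k`-algebra homomorphism from `A` to a
finite-dimensional (discrete) `k`-algebra `C` is continuous. -/
theorem continuity_of_homs_on_pro_nilpotent_assoc (k : Type*) [Field k]
    (A : Type*) [NonUnitalRing A] [Module k A] [SMulCommClass k A A] [IsScalarTower k A A]
    [TopologicalSpace A]
    (ι : Type*) [Preorder ι] [IsDirected ι (· ≤ ·)]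
    (B : ι → Type*) [∀ i, NonUnitalRing (B i)] [∀ i, Module k (B i)]
    [∀ i, SMulCommClass k (B i) (B i)] [∀ i, IsScalarTower k (B i) (B i)]
    [∀ i, TopologicalSpace (B i)] [∀ i, DiscreteTopology (B i)]
    [∀ i, FiniteDimensional k (B i)]
    (f : ∀ i j, i ≤ j → (B j →ₙₐ[k] B i))
    (π : ∀ i, A →ₙₐ[k] B i)
    (hcomp : ∀ (i j) (hij : i ≤ j) (a : A), f i j hij (π j a) = π i a)
    (hemb : Topology.IsEmbedding (fun (a : A) (i : ι) => π i a))
    (hrange : Set.range (fun (a : A) (i : ι) => π i a) =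
      {x : ∀ i, B i | ∀ (i j) (hij : i ≤ j), f i j hij (x j) = x i})
    (s : Finset A)
    (hdense : Dense
      ((NonUnitalAlgebra.adjoin k (↑s : Set A) : NonUnitalSubalgebra k A) : Set A)) :
    (∀ n : ℕ, 1 ≤ n →
      IsOpen ((setPow k A Set.univ n : Submodule k A) : Set A) ∧
      ((setPow k A Set.univ n : Submodule k A) : Set A) =
        closure ((setPow k A
          ((NonUnitalAlgebra.adjoin k (↑s : Set A) : NonUnitalSubalgebra k A) : Set A) n :
            Submodule k A) : Set A)) ∧
    (∀ (C : Type*) [NonUnitalRing C] [Module k C] [SMulCommClass k C C]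
        [IsScalarTower k C C] [TopologicalSpace C] [DiscreteTopology C],
      (∃ n : ℕ, 1 ≤ n ∧ setPow k C Set.univ n = ⊥) →
      ∀ φ : A →ₙₐ[k] C, Continuous φ) ∧
    ((∀ i, ∃ n : ℕ, 1 ≤ n ∧ setPow k (B i) Set.univ n = ⊥) →
      ∀ (C : Type*) [NonUnitalRing C] [Module k C] [SMulCommClass k C C]
        [IsScalarTower k C C] [TopologicalSpace C] [DiscreteTopology C]
        [FiniteDimensional k C],
      ∀ φ : A →ₙₐ[k] C, Continuous φ) := by
  classical
  rcases isEmpty_or_nonempty ι with hι | hι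
  · -- degenerate case: `A` is a single point
    haveI : Subsingleton A :=
      ⟨fun a b => hemb.injective (funext fun i => isEmptyElim i)⟩
    have hopen : ∀ U : Set A, IsOpen U := by
      intro U
      rcases U.eq_empty_or_nonempty with rfl | ⟨u, hu⟩
      · exact isOpen_empty
      · have : U = Set.univ := Set.eq_univ_of_forall fun y => (Subsingleton.elim y u) ▸ hu
        rw [this]; exact isOpen_univ
    have hsetuniv : ∀ M : Submodule k A, (M : Set A) = Set.univ := fun M =>
      Set.eq_univ_of_forall fun y => (Subsingleton.elim y (0 : A)) ▸ M.zero_mem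
    refine ⟨fun n hn => ⟨hopen _, ?_⟩, ?_, ?_⟩
    · rw [hsetuniv, hsetuniv, closure_univ]
    · intro C _ _ _ _ _ _ _ φ
      exact continuous_def.mpr fun U _ => hopen _
    · intro _ C _ _ _ _ _ _ _ φ
      exact continuous_def.mpr fun U _ => hopen _
  -- main case
  set Sset : Set A :=
    ((NonUnitalAlgebra.adjoin k (↑s : Set A) : NonUnitalSubalgebra k A) : Set A) with hSset
  -- continuity criterion via the embedding
  have hcont_comb : ∀ g : A → A,
      (∀ i, Continuous fun x => π i (g x)) → Continuous g := by
    intro g hg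
    rw [hemb.toIsInducing.continuous_iff]
    exact continuous_pi hg
  have hπcont : ∀ i, Continuous (π i) := fun i => (continuous_apply i).comp hemb.continuous
  -- kernels
  set K : ι → Submodule k A := fun i => Submodule.comap (π i : A →ₗ[k] B i) ⊥ with hK
  have hKmem : ∀ i (x : A), x ∈ K i ↔ π i x = 0 := by
    intro i x
    rw [hK]
    simp [Submodule.mem_comap]
  have hKmono : ∀ {i j : ι}, i ≤ j → K j ≤ K i := by
    intro i j hij x hx
    rw [hKmem] at hx ⊢
    rw [← hcomp i j hij x, hx, map_zero]
  have hsub_cont : ∀ x : A, Continuous fun y : A => x - y := by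
    intro x
    apply hcont_comb
    intro i
    have : (fun y : A => π i (x - y)) = (fun b : B i => π i x - b) ∘ (π i) := by
      funext y; simp [map_sub]
    rw [this]
    exact (continuous_of_discreteTopology).comp (hπcont i)
  have hshift_open : ∀ (x : A) (i : ι), IsOpen {y : A | x - y ∈ K i} := by
    intro x i
    have : {y : A | x - y ∈ K i} = (fun y : A => x - y) ⁻¹' (K i : Set A) := rfl
    rw [this]
    apply (hsub_cont x).isOpen_preimage
    have : (K i : Set A) = (π i) ⁻¹' {0} := by
      ext z; simp [hKmem]
    rw [this]
    exact (hπcont i).isOpen_preimage _ (isOpen_discrete _)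
  have hclose1 : ∀ (X : Set A) (x : A), x ∈ closure X → ∀ i, ∃ m ∈ X, x - m ∈ K i := by
    intro X x hx i
    have hU : IsOpen {y : A | x - y ∈ K i} := hshift_open x i
    have hxU : x ∈ {y : A | x - y ∈ K i} := by
      simp only [Set.mem_setOf_eq, sub_self]
      exact (K i).zero_mem
    obtain ⟨m, hmU, hmX⟩ := mem_closure_iff.mp hx _ hU hxU
    exact ⟨m, hmX, hmU⟩
  have hclose2 : ∀ (X : Set A) (x : A), (∀ i, ∃ m ∈ X, x - m ∈ K i) → x ∈ closure X := by
    intro X x hx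
    rw [mem_closure_iff]
    intro U hU hxU
    obtain ⟨V, hV, rfl⟩ := hemb.toIsInducing.isOpen_iff.mp hU
    have hVmem : V ∈ nhds ((fun (a : A) (i : ι) => π i a) x) := hV.mem_nhds hxU
    rw [nhds_pi, Filter.mem_pi] at hVmem
    obtain ⟨I, hIfin, t, ht, hsub⟩ := hVmem
    obtain ⟨i₀, hi₀⟩ := hIfin.toFinset.exists_le
    obtain ⟨m, hmX, hmK⟩ := hx i₀
    refine ⟨m, ?_, hmX⟩
    apply hsub
    intro i hiI
    have hKi : x - m ∈ K i := hKmono (hi₀ i (hIfin.mem_toFinset.mpr hiI)) hmK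
    have hpi : π i m = π i x := by
      have := (hKmem i _).mp hKi
      rw [map_sub] at this
      have := sub_eq_zero.mp this
      exact this.symm
    have hti : π i x ∈ t i := by
      have := ht i
      rw [nhds_discrete, Filter.mem_pure] at this
      exact this
    show π i m ∈ t i
    rw [hpi]
    exact hti
  -- density: the image of S fills the image of A in each B i
  have hdense_pt : ∀ (i : ι) (a : A), ∃ m ∈ Sset, π i a = π i m := by
    intro i a
    obtain ⟨m, hm, hK'⟩ := hclose1 Sset a (hdense a) i
    refine ⟨m, hm, ?_⟩
    have := (hKmem i _).mp hK'
    rw [map_sub] at this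
    exact (sub_eq_zero.mp this)
  have himg : ∀ i, (π i) '' Set.univ = (π i) '' Sset := by
    intro i
    apply Set.Subset.antisymm
    · rintro z ⟨a, -, rfl⟩
      obtain ⟨m, hm, heq⟩ := hdense_pt i a
      exact ⟨m, hm, heq.symm⟩
    · exact Set.image_mono (Set.subset_univ _)
  have hmapAS : ∀ (i : ι) (n : ℕ), Submodule.map (π i : A →ₗ[k] B i) (setPow k A Set.univ n)
      = Submodule.map (π i : A →ₗ[k] B i) (setPow k A Sset n) := by
    intro i n
    rw [map_setPow, map_setPow, himg i]
  -- Γ : products of elements of s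
  set Γ : Set A := (Subsemigroup.closure (↑s : Set A) : Set A) with hΓ
  have hSsetΓ : Sset = ((Submodule.span k Γ : Submodule k A) : Set A) := by
    rw [hSset, ← NonUnitalAlgebra.adjoin_eq_span]
    rfl
  -- ============ the main statement for each n ≥ 2 ============
  have hmain : ∀ n' : ℕ,
      IsOpen ((setPow k A Set.univ (n' + 2) : Submodule k A) : Set A) ∧
      ((setPow k A Set.univ (n' + 2) : Submodule k A) : Set A)
        = closure ((setPow k A Sset (n' + 2) : Submodule k A) : Set A) := by
    intro n'
    set Widx := ((↑s : Type _) × (Fin n' → (↑s : Type _))) with hWidx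
    set W : Widx → A := fun p => (List.ofFn fun q => ((p.2 q : A))).foldl (· * ·) (p.1 : A)
      with hWdef
    have hWmem : ∀ p, W p ∈ setPow k A (↑s : Set A) (n' + 1) := by
      intro p
      apply Submodule.subset_span
      refine ⟨(p.1 : A), List.ofFn fun q => ((p.2 q : A)), p.1.2, ?_, by simp, rfl⟩
      intro b hb
      obtain ⟨q, rfl⟩ := List.mem_ofFn.mp hb
      exact (p.2 q).2
    set Φ : (Widx → A) →ₗ[k] A :=
      ∑ p : Widx, (LinearMap.mulLeft k (W p)).comp (LinearMap.proj p) with hΦdef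
    have hΦapp : ∀ t : Widx → A, Φ t = ∑ p : Widx, W p * t p := by
      intro t
      rw [hΦdef]
      simp [LinearMap.coe_sum, Finset.sum_apply, LinearMap.coe_comp, Function.comp,
        LinearMap.mulLeft_apply, LinearMap.proj_apply]
    set Z : Submodule k A := LinearMap.range Φ with hZdef
    have hsingleZ : ∀ (p : Widx) (r : A), W p * r ∈ Z := by
      intro p r
      refine ⟨Pi.single p r, ?_⟩
      rw [hΦapp, Finset.sum_eq_single p]
      · rw [Pi.single_eq_same]
      · intro q _ hq
        rw [Pi.single_eq_of_ne hq, mul_zero]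
      · intro hq; exact absurd (Finset.mem_univ p) hq
    have hZA : Z ≤ setPow k A Set.univ (n' + 2) := by
      rintro x ⟨t, rfl⟩
      rw [hΦapp]
      apply Submodule.sum_mem
      intro p _
      have h1 : W p ∈ setPow k A Set.univ (n' + 1) :=
        setPow_mono (Set.subset_univ _) _ (hWmem p)
      have h2 : t p ∈ setPow k A Set.univ 1 := by
        rw [setPow_univ_one]; exact Submodule.mem_top
      have := setPow_mul_mem (by omega) h1 h2
      rwa [show n' + 1 + 1 = n' + 2 by omega] at this
    have word_in_Z : ∀ (c' : A) (lw' : List A), c' ∈ (↑s : Set A) →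
        (∀ e ∈ lw', e ∈ (↑s : Set A)) → n' + 1 ≤ lw'.length →
        lw'.foldl (· * ·) c' ∈ Z := by
      intro c' lw' hc' hlw' hlen
      have hsplit : lw' = lw'.take n' ++ lw'.drop n' := (List.take_append_drop n' lw').symm
      have htlen : (lw'.take n').length = n' := by rw [List.length_take]; omega
      obtain ⟨d, rest, hd⟩ : ∃ d rest, lw'.drop n' = d :: rest := by
        cases hcase : lw'.drop n' with
        | nil =>
          exfalso
          have h5 : (lw'.drop n').length = lw'.length - n' := List.length_drop
          rw [hcase] at h5
          simp at h5
          omega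
        | cons d rest => exact ⟨d, rest, rfl⟩
      set p : Widx := (⟨c', hc'⟩, fun q => ⟨(lw'.take n').get (Fin.cast htlen.symm q),
        hlw' _ (List.take_subset _ _ (List.get_mem _ _))⟩) with hp
      have hWp : W p = (lw'.take n').foldl (· * ·) c' := by
        show (List.ofFn fun q => ((p.2 q : A))).foldl (· * ·) (p.1 : A)
          = (lw'.take n').foldl (· * ·) c'
        have h6 : (List.ofFn fun q : Fin n' => ((p.2 q : A))) = lw'.take n' :=
          (list_eq_ofFn _ htlen).symm
        rw [h6]
      have h7 : lw'.foldl (· * ·) c' = W p * (rest.foldl (· * ·) d) := by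
        conv_lhs => rw [hsplit, hd]
        rw [List.foldl_append, List.foldl_cons, hWp, mul_foldl]
      rw [h7]
      exact hsingleZ p _
    have hSZ : setPow k A Sset (n' + 2) ≤ Z := by
      have h1 : setPow k A Sset (n' + 2) ≤ setPow k A Γ (n' + 2) := by
        rw [hSsetΓ]
        exact setPow_span_le Γ (n' + 2)
      refine h1.trans ?_
      apply Submodule.span_le.mpr
      rintro x ⟨a, l, ha, hl, hlen, rfl⟩
      obtain ⟨c, lw, hc, hlw, rfl⟩ := word_of_mem_closure (T := (↑s : Set A)) ha
      obtain ⟨c', lw', hc', hlw', heq, hlen'⟩ := foldl_words l _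
        (fun b hb => word_of_mem_closure (hl b hb)) c lw hc hlw rfl
      rw [heq]
      exact word_in_Z c' lw' hc' hlw' (by omega)
    have hZclosed : ∀ x : A, (∀ i, ∃ z ∈ (Z : Set A), x - z ∈ K i) → x ∈ Z := by
      intro x hx
      let Tcar : ∀ i : ι, Set (Widx → B i) := fun i =>
        {t | (∀ p, ∃ a : A, π i a = t p) ∧ ∑ p : Widx, π i (W p) * t p = π i x}
      have Tsm : ∀ (i : ι) (c : k) (t1 t2 t3 : Widx → B i),
          t1 ∈ Tcar i → t2 ∈ Tcar i → t3 ∈ Tcar i →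
          c • (t1 -ᵥ t2) +ᵥ t3 ∈ Tcar i := by
        intro i c t1 t2 t3 h1 h2 h3
        constructor
        · intro p
          obtain ⟨a1, ha1⟩ := h1.1 p
          obtain ⟨a2, ha2⟩ := h2.1 p
          obtain ⟨a3, ha3⟩ := h3.1 p
          refine ⟨c • (a1 - a2) + a3, ?_⟩
          have he : (c • (t1 -ᵥ t2) +ᵥ t3) p = c • (t1 p - t2 p) + t3 p := rfl
          rw [he, map_add, map_smul, map_sub, ha1, ha2, ha3]
        · have hterm : ∀ p : Widx, π i (W p) * ((c • (t1 -ᵥ t2) +ᵥ t3) p)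
              = (c • (π i (W p) * t1 p) - c • (π i (W p) * t2 p)) + π i (W p) * t3 p := by
            intro p
            have he : (c • (t1 -ᵥ t2) +ᵥ t3) p = c • (t1 p - t2 p) + t3 p := rfl
            rw [he, mul_add, mul_smul_comm, mul_sub, smul_sub]
          rw [Finset.sum_congr rfl (fun p _ => hterm p), Finset.sum_add_distrib,
            Finset.sum_sub_distrib, ← Finset.smul_sum, ← Finset.smul_sum,
            h1.2, h2.2, h3.2]
          simp
      let T : ∀ i : ι, AffineSubspace k (Widx → B i) := fun i =>
        ⟨Tcar i, fun c {t1 t2 t3} h1 h2 h3 => Tsm i c t1 t2 t3 h1 h2 h3⟩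
      have hTmem : ∀ (i : ι) (t : Widx → B i), t ∈ T i ↔ t ∈ Tcar i := fun i t => Iff.rfl
      let F : ∀ i j : ι, i ≤ j → ((Widx → B j) →ₗ[k] (Widx → B i)) := fun i j h =>
        LinearMap.pi (fun p : Widx => ((f i j h : B j →ₗ[k] B i)).comp (LinearMap.proj p))
      have hFapp : ∀ (i j : ι) (h : i ≤ j) (t : Widx → B j) (p : Widx),
          F i j h t p = f i j h (t p) := fun i j h t p => rfl
      have hne : ∀ i, ((T i : Set (Widx → B i))).Nonempty := by
        intro i
        obtain ⟨z, hzZ, hzK⟩ := hx i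
        obtain ⟨t, rfl⟩ := hzZ
        refine ⟨fun p => π i (t p), (hTmem i _).mpr ⟨fun p => ⟨t p, rfl⟩, ?_⟩⟩
        have h1 : ∀ p : Widx, π i (W p) * π i (t p) = π i (W p * t p) :=
          fun p => (map_mul (π i) _ _).symm
        rw [Finset.sum_congr rfl (fun p _ => h1 p), ← map_sum, ← hΦapp]
        have := (hKmem i _).mp hzK
        rw [map_sub] at this
        have := sub_eq_zero.mp this
        exact this.symm
      have hstab : ∀ (i j : ι) (h : i ≤ j), ∀ t ∈ T j, F i j h t ∈ T i := by
        intro i j hij t ht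
        have ht' := (hTmem j t).mp ht
        refine (hTmem i _).mpr ⟨?_, ?_⟩
        · intro p
          obtain ⟨a, ha⟩ := ht'.1 p
          exact ⟨a, by rw [hFapp, ← ha, hcomp]⟩
        · have h1 : ∀ p : Widx, π i (W p) * (F i j hij t) p
              = f i j hij (π j (W p) * t p) := by
            intro p
            rw [hFapp, map_mul, hcomp]
          rw [Finset.sum_congr rfl (fun p _ => h1 p), ← map_sum, ht'.2, hcomp]
      have hcompat : ∀ (i j l : ι) (hij : i ≤ j) (hjl : j ≤ l), ∀ t ∈ T l,
          F i j hij (F j l hjl t) = F i l (hij.trans hjl) t := by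
        intro i j l hij hjl t ht
        have ht' := (hTmem l t).mp ht
        funext p
        obtain ⟨a, ha⟩ := ht'.1 p
        rw [hFapp, hFapp, hFapp, ← ha, hcomp, hcomp, hcomp]
      have hrefl : ∀ i : ι, ∀ t ∈ T i, F i i le_rfl t = t := by
        intro i t ht
        have ht' := (hTmem i t).mp ht
        funext p
        obtain ⟨a, ha⟩ := ht'.1 p
        rw [hFapp, ← ha, hcomp]
      obtain ⟨g, hgT, hgC⟩ := exists_thread (fun i : ι => Widx → B i) F T hne hstab hcompat hrefl
      have hxthread : ∀ p : Widx, ∃ a : A, ∀ i, π i a = g i p := by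
        intro p
        have hmem : (fun i => g i p) ∈ Set.range (fun (a : A) (i : ι) => π i a) := by
          rw [hrange]
          intro i j hij
          have h2 := congrFun (hgC i j hij) p
          rw [hFapp] at h2
          exact h2
        obtain ⟨a, ha⟩ := hmem
        exact ⟨a, fun i => congrFun ha i⟩
      choose tA htA using hxthread
      refine ⟨tA, ?_⟩
      apply hemb.injective
      funext i
      show π i (Φ tA) = π i x
      rw [hΦapp, map_sum]
      have h3 : ∀ p : Widx, π i (W p * tA p) = π i (W p) * g i p := by
        intro p; rw [map_mul, htA p i]
      rw [Finset.sum_congr rfl fun p _ => h3 p]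
      exact ((hTmem i _).mp (hgT i)).2
    have hAZ : setPow k A Set.univ (n' + 2) = Z := by
      apply le_antisymm ?_ hZA
      intro x hxA
      apply hZclosed
      intro i
      have hxm : π i x ∈ Submodule.map (π i : A →ₗ[k] B i) (setPow k A Sset (n' + 2)) := by
        rw [← hmapAS]
        exact Submodule.mem_map_of_mem hxA
      obtain ⟨m, hm, hπm⟩ := hxm
      refine ⟨m, hSZ hm, ?_⟩
      rw [hKmem, map_sub, sub_eq_zero]; exact hπm.symm
    have hAnclosed : ∀ x ∈ closure ((setPow k A Set.univ (n' + 2) : Submodule k A) : Set A),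
        x ∈ setPow k A Set.univ (n' + 2) := by
      intro x hxcl
      rw [hAZ]
      apply hZclosed
      intro i
      obtain ⟨m, hm, hK'⟩ := hclose1 _ x hxcl i
      refine ⟨m, ?_, hK'⟩
      rw [← hAZ]
      exact hm
    have hclosureEq : ((setPow k A Set.univ (n' + 2) : Submodule k A) : Set A)
        = closure ((setPow k A Sset (n' + 2) : Submodule k A) : Set A) := by
      apply Set.Subset.antisymm
      · intro x hxA
        apply hclose2
        intro i
        have hxm : π i x ∈ Submodule.map (π i : A →ₗ[k] B i) (setPow k A Sset (n' + 2)) := by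
          rw [← hmapAS]
          exact Submodule.mem_map_of_mem hxA
        obtain ⟨m, hm, hπm⟩ := hxm
        exact ⟨m, hm, by rw [hKmem, map_sub, sub_eq_zero]; exact hπm.symm⟩
      · intro y hycl
        have hyZ : y ∈ Z := by
          apply hZclosed
          intro i
          obtain ⟨m, hm, hK'⟩ := hclose1 _ y hycl i
          exact ⟨m, hSZ hm, hK'⟩
        show y ∈ setPow k A Set.univ (n' + 2)
        rw [hAZ]
        exact hyZ
    -- a finite-dimensional subspace spanned by short words
    set Cset : Set A := {x : A | ∃ (c : A) (lw : List A), c ∈ (↑s : Set A) ∧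
      (∀ e ∈ lw, e ∈ (↑s : Set A)) ∧ lw.length ≤ n' ∧ x = lw.foldl (· * ·) c} with hCset
    have hCfin : Cset.Finite := by
      apply Set.Finite.subset (Set.finite_range
        (fun pq : (Σ m : Fin (n' + 1), ((↑s : Type _) × (Fin (m : ℕ) → (↑s : Type _)))) =>
          (List.ofFn fun q => ((pq.2.2 q : A))).foldl (· * ·) (pq.2.1 : A)))
      rintro x ⟨c, lw, hc, hlw, hlen, rfl⟩
      refine ⟨⟨⟨lw.length, by omega⟩, ⟨c, hc⟩,
        fun q => ⟨lw.get (Fin.cast rfl q), hlw _ (List.get_mem _ _)⟩⟩, ?_⟩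
      show (List.ofFn fun q => (lw.get (Fin.cast rfl q))).foldl (· * ·) c
        = lw.foldl (· * ·) c
      rw [← list_eq_ofFn lw rfl]
    set Csub : Submodule k A := Submodule.span k Cset with hCsubdef
    haveI hCfd : FiniteDimensional k Csub := FiniteDimensional.span_of_finite k hCfin
    have hdecomp : ∀ (a : A) (i : ι), ∃ c ∈ Csub,
        a - c ∈ setPow k A Set.univ (n' + 2) ⊔ K i := by
      intro a i
      obtain ⟨m, hmS, hπ⟩ := hdense_pt i a
      have hmCA : m ∈ Csub ⊔ setPow k A Set.univ (n' + 2) := by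
        have hm2 : m ∈ Submodule.span k Γ := by
          rw [hSsetΓ] at hmS
          exact hmS
        refine Submodule.span_le.mpr ?_ hm2
        intro g hg
        obtain ⟨c, lw, hc, hlw, rfl⟩ := word_of_mem_closure hg
        by_cases hcase : lw.length ≤ n'
        · exact Submodule.mem_sup_left (Submodule.subset_span ⟨c, lw, hc, hlw, hcase, rfl⟩)
        · apply Submodule.mem_sup_right
          have h1 : lw.foldl (· * ·) c ∈ setPow k A (↑s : Set A) (lw.length + 1) :=
            foldl_gen_mem hc hlw rfl
          have h2 := setPow_mono (Set.subset_univ _) _ h1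
          exact setPow_univ_antitone (by omega) (by omega) h2
      obtain ⟨c, hcC, w, hwA, hcw⟩ := Submodule.mem_sup.mp hmCA
      refine ⟨c, hcC, ?_⟩
      apply Submodule.mem_sup.mpr
      refine ⟨w, hwA, a - m, ?_, ?_⟩
      · rw [hKmem, map_sub, hπ, sub_self]
      · rw [← hcw]
        abel
    have htop : ∀ a : A, a ∈ Csub ⊔ setPow k A Set.univ (n' + 2) := by
      intro a
      let FAcar : ι → Set (↥Csub) := fun i =>
        {c : ↥Csub | a - (c : A) ∈ setPow k A Set.univ (n' + 2) ⊔ K i}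
      have FAsm : ∀ (i : ι) (c : k) (c1 c2 c3 : ↥Csub), c1 ∈ FAcar i → c2 ∈ FAcar i →
          c3 ∈ FAcar i → c • (c1 -ᵥ c2) +ᵥ c3 ∈ FAcar i := by
        intro i c c1 c2 c3 h1 h2 h3
        have he : ((c • (c1 -ᵥ c2) +ᵥ c3 : ↥Csub) : A)
            = c • ((c1 : A) - (c2 : A)) + (c3 : A) := by
          simp [vsub_eq_sub, vadd_eq_add]
        have heq : a - (c • ((c1 : A) - (c2 : A)) + (c3 : A))
            = c • ((a - (c1 : A)) - (a - (c2 : A))) + (a - (c3 : A)) := by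
          simp only [smul_sub]
          abel
        show a - ((c • (c1 -ᵥ c2) +ᵥ c3 : ↥Csub) : A) ∈ setPow k A Set.univ (n' + 2) ⊔ K i
        rw [he, heq]
        exact Submodule.add_mem _ (Submodule.smul_mem _ _ (Submodule.sub_mem _ h1 h2)) h3
      let FA : ι → AffineSubspace k (↥Csub) := fun i =>
        ⟨FAcar i, fun c {c1 c2 c3} h1 h2 h3 => FAsm i c c1 c2 c3 h1 h2 h3⟩
      have hFAne : ∀ i, ((FA i : Set ↥Csub)).Nonempty := by
        intro i
        obtain ⟨c, hc, hcd⟩ := hdecomp a i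
        exact ⟨⟨c, hc⟩, hcd⟩
      have hFAdir : ∀ i j : ι, ∃ l, FA l ≤ FA i ∧ FA l ≤ FA j := by
        intro i j
        obtain ⟨l, hli, hlj⟩ := exists_ge_ge i j
        constructor
        case h =>
          constructor
          · intro c hc
            exact SetLike.le_def.mp (sup_le_sup_left (hKmono hli) _) hc
          · intro c hc
            exact SetLike.le_def.mp (sup_le_sup_left (hKmono hlj) _) hc
      obtain ⟨i₁, hi₁⟩ := exists_min_affine FA hFAne hFAdir
      obtain ⟨cstar, hcstar⟩ := hFAne i₁
      have hall : ∀ i, a - (cstar : A) ∈ setPow k A Set.univ (n' + 2) ⊔ K i :=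
        fun i => hi₁ i hcstar
      have hAn : a - (cstar : A) ∈ setPow k A Set.univ (n' + 2) := by
        apply hAnclosed
        apply hclose2
        intro i
        obtain ⟨y, hy, z, hz, hyz⟩ := Submodule.mem_sup.mp (hall i)
        refine ⟨y, hy, ?_⟩
        rw [show a - ↑cstar - y = z by rw [← hyz]; abel]
        exact hz
      have hsplit2 : a = (cstar : A) + (a - (cstar : A)) := by abel
      rw [hsplit2]
      exact Submodule.add_mem _ (Submodule.mem_sup_left cstar.2) (Submodule.mem_sup_right hAn)
    haveI hQfd : FiniteDimensional k (A ⧸ setPow k A Set.univ (n' + 2)) := by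
      apply Module.Finite.of_surjective ((setPow k A Set.univ (n' + 2)).mkQ.comp Csub.subtype)
      intro q
      obtain ⟨a, rfl⟩ := Submodule.mkQ_surjective _ q
      obtain ⟨c, hc, w, hw, hcw⟩ := Submodule.mem_sup.mp (htop a)
      refine ⟨⟨c, hc⟩, ?_⟩
      show (setPow k A Set.univ (n' + 2)).mkQ c = (setPow k A Set.univ (n' + 2)).mkQ a
      rw [Submodule.mkQ_apply, Submodule.mkQ_apply]
      apply (Submodule.Quotient.eq _).mpr
      rw [show c - a = -w by rw [← hcw]; abel]
      exact Submodule.neg_mem _ hw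
    obtain ⟨i₂, hi₂⟩ := exists_min_submodule
      (fun i : ι => Submodule.map (setPow k A Set.univ (n' + 2)).mkQ (K i))
      (by
        intro i j
        obtain ⟨l, hli, hlj⟩ := exists_ge_ge i j
        exact ⟨l, Submodule.map_mono (hKmono hli), Submodule.map_mono (hKmono hlj)⟩)
    have hKsub : K i₂ ≤ setPow k A Set.univ (n' + 2) := by
      intro x hxK
      apply hAnclosed
      apply hclose2
      intro i
      have h1 : (setPow k A Set.univ (n' + 2)).mkQ x
          ∈ Submodule.map (setPow k A Set.univ (n' + 2)).mkQ (K i) :=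
        hi₂ i ⟨x, hxK, rfl⟩
      obtain ⟨u, huK, huq⟩ := h1
      have h2 : u - x ∈ setPow k A Set.univ (n' + 2) := by
        apply (Submodule.Quotient.eq _).mp
        rw [← Submodule.mkQ_apply, ← Submodule.mkQ_apply]
        exact huq
      refine ⟨x - u, ?_, ?_⟩
      · have := Submodule.neg_mem _ h2
        rw [neg_sub] at this
        exact this
      · rw [show x - (x - u) = u by abel]
        exact huK
    have hopen : IsOpen ((setPow k A Set.univ (n' + 2) : Submodule k A) : Set A) := by
      rw [isOpen_iff_mem_nhds]
      intro x hx
      rw [mem_nhds_iff]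
      refine ⟨{y : A | x - y ∈ K i₂}, ?_, hshift_open x i₂, ?_⟩
      · intro y hy
        have h1 : x - y ∈ setPow k A Set.univ (n' + 2) := hKsub hy
        have h2 : y = x - (x - y) := by abel
        rw [SetLike.mem_coe] at hx ⊢
        rw [h2]
        exact Submodule.sub_mem _ hx h1
      · show x - x ∈ K i₂
        rw [sub_self]
        exact (K i₂).zero_mem
    exact ⟨hopen, hclosureEq⟩
  have hpart1 : ∀ n : ℕ, 1 ≤ n →
      IsOpen ((setPow k A Set.univ n : Submodule k A) : Set A) ∧
      ((setPow k A Set.univ n : Submodule k A) : Set A)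
        = closure ((setPow k A Sset n : Submodule k A) : Set A) := by
    intro n hn
    rcases Nat.lt_or_ge n 2 with h2 | h2
    · have hn1 : n = 1 := by omega
      subst hn1
      constructor
      · rw [setPow_univ_one]
        show IsOpen ((⊤ : Submodule k A) : Set A)
        rw [Submodule.top_coe]
        exact isOpen_univ
      · rw [setPow_univ_one, setPow_one]
        have h4 : closure Sset ⊆ closure ((Submodule.span k Sset : Submodule k A) : Set A) :=
          closure_mono Submodule.subset_span
        have h5 : Set.univ ⊆ closure ((Submodule.span k Sset : Submodule k A) : Set A) := by
          rw [← hdense.closure_eq]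
          exact h4
        show ((⊤ : Submodule k A) : Set A) = _
        rw [Submodule.top_coe]
        exact Set.Subset.antisymm h5 (Set.subset_univ _)
    · obtain ⟨n', rfl⟩ : ∃ n', n = n' + 2 := ⟨n - 2, by omega⟩
      exact hmain n'
  refine ⟨hpart1, ?_, ?_⟩
  · intro C _ _ _ _ _ _ hnil φ
    obtain ⟨nC, hnC1, hbot⟩ := hnil
    have hker : ∀ y ∈ setPow k A Set.univ nC, φ y = 0 := by
      intro y hy
      have h1 : φ y ∈ Submodule.map (φ : A →ₗ[k] C) (setPow k A Set.univ nC) := Submodule.mem_map_of_mem hy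
      rw [map_setPow] at h1
      have h2 : φ y ∈ setPow k C Set.univ nC := setPow_mono (Set.subset_univ _) _ h1
      rw [hbot] at h2
      simpa using h2
    rw [continuous_def]
    intro U hU
    rw [isOpen_iff_mem_nhds]
    intro x hx
    rw [mem_nhds_iff]
    refine ⟨{y : A | x - y ∈ setPow k A Set.univ nC}, ?_, ?_, ?_⟩
    · intro y hy
      have h3 : φ (x - y) = 0 := hker _ hy
      rw [map_sub, sub_eq_zero] at h3
      show φ y ∈ U
      rw [← h3]
      exact hx
    · have h3 : {y : A | x - y ∈ setPow k A Set.univ nC}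
          = (fun y : A => x - y) ⁻¹' ((setPow k A Set.univ nC : Submodule k A) : Set A) := rfl
      rw [h3]
      exact (hsub_cont x).isOpen_preimage _ (hpart1 nC hnC1).1
    · show x - x ∈ setPow k A Set.univ nC
      rw [sub_self]
      exact Submodule.zero_mem _
  · intro hnilB C _ _ _ _ _ _ _ φ
    have hqA : ∀ a : A, ∃ a' : A, (a + a' + a * a' = 0) ∧ (a + a' + a' * a = 0) := by
      intro a
      have hq : ∀ i : ι, ∃ c : B i,
          ((π i a) + c + (π i a) * c = 0 ∧ (π i a) + c + c * (π i a) = 0) ∧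
          ∀ d, ((π i a) + d + (π i a) * d = 0 ∧ (π i a) + d + d * (π i a) = 0) → d = c :=
        fun i => exists_unique_qinv (hnilB i) (π i a)
      choose q hq1 hq2 using hq
      have hmem : (fun i => q i) ∈ Set.range (fun (a : A) (i : ι) => π i a) := by
        rw [hrange]
        intro i j hij
        apply hq2 i
        constructor
        · have h6 := congrArg (f i j hij) (hq1 j).1
          rw [map_add, map_add, map_mul, map_zero, hcomp] at h6
          exact h6
        · have h6 := congrArg (f i j hij) (hq1 j).2
          rw [map_add, map_add, map_mul, map_zero, hcomp] at h6
          exact h6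
      obtain ⟨a', ha'⟩ := hmem
      have hπa' : ∀ i, π i a' = q i := fun i => congrFun ha' i
      refine ⟨a', ?_, ?_⟩
      · apply hemb.injective
        funext i
        show π i (a + a' + a * a') = π i 0
        rw [map_zero, map_add, map_add, map_mul, hπa']
        exact (hq1 i).1
      · apply hemb.injective
        funext i
        show π i (a + a' + a' * a) = π i 0
        rw [map_zero, map_add, map_add, map_mul, hπa']
        exact (hq1 i).2
    have hspan : ((Submodule.span k (Set.range φ) : Submodule k C) : Set C) = Set.range φ := by
      have h1 : Set.range ⇑φ = ((LinearMap.range (φ : A →ₗ[k] C) : Submodule k C) : Set C) := by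
        ext z
        simp [LinearMap.mem_range]
      rw [h1, Submodule.span_eq]
    have hmulr : ∀ x ∈ Set.range ⇑φ, ∀ y ∈ Set.range ⇑φ, x * y ∈ Set.range ⇑φ := by
      rintro x ⟨a, rfl⟩ y ⟨b, rfl⟩
      exact ⟨a * b, map_mul φ a b⟩
    have hqr : ∀ x ∈ Set.range ⇑φ, ∃ y ∈ Set.range ⇑φ, x + y + y * x = 0 := by
      rintro x ⟨a, rfl⟩
      obtain ⟨a', h1, h2⟩ := hqA a
      refine ⟨φ a', ⟨a', rfl⟩, ?_⟩
      rw [← map_mul, ← map_add, ← map_add, h2, map_zero]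
    obtain ⟨m, hm1, hmbot⟩ := nilpotent_of_quasiregular (Set.range ⇑φ) hspan hmulr hqr
    have hker : ∀ y ∈ setPow k A Set.univ m, φ y = 0 := by
      intro y hy
      have h1 : φ y ∈ Submodule.map (φ : A →ₗ[k] C) (setPow k A Set.univ m) := Submodule.mem_map_of_mem hy
      rw [map_setPow] at h1
      have h2 : φ y ∈ setPow k C (Set.range ⇑φ) m := by
        rw [← Set.image_univ]
        exact h1
      rw [hmbot] at h2
      simpa using h2
    rw [continuous_def]
    intro U hU
    rw [isOpen_iff_mem_nhds]
    intro x hx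
    rw [mem_nhds_iff]
    refine ⟨{y : A | x - y ∈ setPow k A Set.univ m}, ?_, ?_, ?_⟩
    · intro y hy
      have h3 : φ (x - y) = 0 := hker _ hy
      rw [map_sub, sub_eq_zero] at h3
      show φ y ∈ U
      rw [← h3]
      exact hx
    · have h3 : {y : A | x - y ∈ setPow k A Set.univ m}
          = (fun y : A => x - y) ⁻¹' ((setPow k A Set.univ m : Submodule k A) : Set A) := rfl
      rw [h3]
      exact (hsub_cont x).isOpen_preimage _ (hpart1 m hm1).1
    · show x - x ∈ setPow k A Set.univ m
      rw [sub_self]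
      exact Submodule.zero_mem _
end
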